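/- arXiv:1409.6949 — 14 statements merged into one kernel-verified Lean document; each statement's English description precedes it below -/
import Mathlib

section
/- Every finite simple graph G with at least one vertex admits a feasible schedule for boat capacity β(G) + 1. -/
open Finset

/-- `C` is a vertex cover of `G`: every edge has an endpoint in `C`. -/
def IsCover {V : Type*} (G : SimpleGraph V) (C : Finset V) : Prop :=
  ∀ ⦃u v : V⦄, G.Adj u v → u ∈ C ∨ v ∈ C

/-- `A` is an independent set of `G`: no two of its vertices are adjacent. -/
def IsIndep {V : Type*} (G : SimpleGraph V) (A : Finset V) : Prop :=
  ∀ ⦃u : V⦄, u ∈ A → ∀ ⦃v : V⦄, v ∈ A → ¬ G.Adj u v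

/-- The vertex cover number β(G): the minimum size of a vertex cover of `G`. -/
noncomputable def coverNumber {V : Type*} [Fintype V] (G : SimpleGraph V) : ℕ :=
  sInf {n : ℕ | ∃ C : Finset V, IsCover G C ∧ C.card = n}

/-- `G` admits a feasible schedule for a boat of capacity `b`, in the sense of the
structure theorem of Csorba, Hurkens and Woeginger. -/
def Feasible {V : Type*} [Fintype V] [DecidableEq V] (G : SimpleGraph V) (b : ℕ) : Prop :=
  ∃ X₁ X₂ X₃ Y₁ Y₂ : Finset V,
    Disjoint X₁ X₂ ∧ Disjoint X₁ X₃ ∧ Disjoint X₂ X₃ ∧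
    IsIndep G (X₁ ∪ X₂ ∪ X₃) ∧
    Y₁.Nonempty ∧ Y₂.Nonempty ∧
    Y₁ ⊆ Finset.univ \ (X₁ ∪ X₂ ∪ X₃) ∧ Y₂ ⊆ Finset.univ \ (X₁ ∪ X₂ ∪ X₃) ∧
    (Finset.univ \ (X₁ ∪ X₂ ∪ X₃)).card ≤ b ∧
    IsIndep G (X₁ ∪ Y₁) ∧ IsIndep G (X₂ ∪ Y₂) ∧
    X₃.card ≤ Y₁.card + Y₂.card

/-- `G` is of class one if it has a feasible schedule for boat capacity β(G). -/
def ClassOne {V : Type*} [Fintype V] [DecidableEq V] (G : SimpleGraph V) : Prop :=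
  Feasible G (coverNumber G)

/-- `G` is of class two if it is not of class one. -/
def ClassTwo {V : Type*} [Fintype V] [DecidableEq V] (G : SimpleGraph V) : Prop :=
  ¬ ClassOne G

/-- Every finite simple graph with at least one vertex admits a feasible schedule
for boat capacity β(G) + 1. -/
theorem feasible_coverNumber_succ {V : Type*} [Fintype V] [DecidableEq V] [Nonempty V]
    (G : SimpleGraph V) : Feasible G (coverNumber G + 1) := by
  have hne : {n : ℕ | ∃ C : Finset V, IsCover G C ∧ C.card = n}.Nonempty :=
    ⟨(univ : Finset V).card, univ, fun u v _ => Or.inl (mem_univ u), rfl⟩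
  obtain ⟨C, hC, hCcard⟩ := Nat.sInf_mem hne
  have hindep : IsIndep G (univ \ C) := by
    intro u hu v hv hadj
    rcases hC hadj with h | h
    · exact (Finset.mem_sdiff.mp hu).2 h
    · exact (Finset.mem_sdiff.mp hv).2 h
  by_cases hcase : (univ \ C : Finset V).Nonempty
  · obtain ⟨v, hv⟩ := hcase
    have hvC : v ∉ C := (Finset.mem_sdiff.mp hv).2
    refine ⟨(univ \ C).erase v, ∅, ∅, {v}, {v}, ?_, ?_, ?_, ?_,
      ⟨v, mem_singleton_self v⟩, ⟨v, mem_singleton_self v⟩, ?_, ?_, ?_, ?_, ?_, ?_⟩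
    · simp
    · simp
    · simp
    · simp only [Finset.union_empty]
      exact fun u hu w hw => hindep (Finset.erase_subset _ _ hu) (Finset.erase_subset _ _ hw)
    · intro x hx
      simp only [Finset.mem_singleton] at hx
      subst hx
      simp
    · intro x hx
      simp only [Finset.mem_singleton] at hx
      subst hx
      simp
    · have hset : univ \ ((univ \ C).erase v ∪ ∅ ∪ ∅) = insert v C := by
        ext x
        simp only [Finset.union_empty, Finset.mem_sdiff, Finset.mem_erase, Finset.mem_insert,
          Finset.mem_univ, true_and]
        tauto
      rw [hset, Finset.card_insert_of_notMem hvC, hCcard, coverNumber]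
    · have : (univ \ C).erase v ∪ {v} = univ \ C := by
        rw [Finset.union_comm, ← Finset.insert_eq, Finset.insert_erase hv]
      rw [this]; exact hindep
    · intro u hu w hw
      simp only [Finset.empty_union, Finset.mem_singleton] at hu hw
      subst hu; subst hw; exact G.irrefl
    · simp
  · obtain ⟨v⟩ := ‹Nonempty V›
    rw [Finset.not_nonempty_iff_eq_empty, Finset.sdiff_eq_empty_iff_subset] at hcase
    refine ⟨∅, ∅, ∅, {v}, {v}, ?_, ?_, ?_, ?_,
      ⟨v, mem_singleton_self v⟩, ⟨v, mem_singleton_self v⟩, ?_, ?_, ?_, ?_, ?_, ?_⟩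
    · simp
    · simp
    · simp
    · intro u hu; simp at hu
    · intro x _; simp
    · intro x _; simp
    · simp only [Finset.union_empty, Finset.sdiff_empty]
      calc (univ : Finset V).card ≤ C.card := Finset.card_le_card hcase
        _ ≤ coverNumber G + 1 := by rw [hCcard, coverNumber]; omega
    · intro u hu w hw
      simp only [Finset.empty_union, Finset.mem_singleton] at hu hw
      subst hu; subst hw; exact G.irrefl
    · intro u hu w hw
      simp only [Finset.empty_union, Finset.mem_singleton] at hu hw
      subst hu; subst hw; exact G.irrefl
    · simp
end

section
/- If a finite simple graph G has two distinct minimum vertex covers (equivalently, two distinct maximum independent sets), then G is of class one. -/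
open Finset

/-- If a graph has two distinct minimum vertex covers, then it is of class one. -/
theorem classOne_of_two_min_covers {V : Type*} [Fintype V] [DecidableEq V]
    (G : SimpleGraph V) (C D : Finset V)
    (hC : IsCover G C) (hD : IsCover G D)
    (hCcard : C.card = coverNumber G) (hDcard : D.card = coverNumber G)
    (hne : C ≠ D) : ClassOne G := by
  have hcard : C.card = D.card := hCcard.trans hDcard.symm
  -- C \ D is nonempty
  have hCD : (C \ D).Nonempty := by
    rw [Finset.sdiff_nonempty]
    intro hsub
    exact hne (Finset.eq_of_subset_of_card_le hsub hcard.ge)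
  obtain ⟨y, hy⟩ := hCD
  refine ⟨Finset.univ \ (C ∪ D), ∅, D \ C, C \ D, {y}, ?_, ?_, ?_, ?_, ?_, ?_, ?_, ?_, ?_, ?_, ?_, ?_⟩
  · simp
  · simp [Finset.disjoint_left]; tauto
  · simp
  · -- union = univ \ C, independent
    have hU : (Finset.univ \ (C ∪ D)) ∪ ∅ ∪ (D \ C) = Finset.univ \ C := by
      ext x; simp; tauto
    rw [hU]
    intro u hu v hv hadj
    simp only [Finset.mem_sdiff, Finset.mem_univ, true_and] at hu hv
    rcases hC hadj with h | h
    · exact hu h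
    · exact hv h
  · exact ⟨y, hy⟩
  · exact ⟨y, Finset.mem_singleton_self y⟩
  · intro x hx
    simp only [Finset.mem_sdiff] at hx ⊢
    simp only [Finset.mem_univ, true_and, Finset.mem_union, Finset.mem_sdiff,
      Finset.notMem_empty]
    tauto
  · intro x hx
    simp only [Finset.mem_singleton] at hx
    subst hx
    simp only [Finset.mem_sdiff] at hy ⊢
    simp only [Finset.mem_univ, true_and, Finset.mem_union, Finset.mem_sdiff,
      Finset.notMem_empty]
    tauto
  · have hU : Finset.univ \ ((Finset.univ \ (C ∪ D)) ∪ ∅ ∪ (D \ C)) = C := by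
      ext x; simp; tauto
    rw [hU, hCcard]
  · -- X₁ ∪ Y₁ = univ \ D, independent
    have hU : (Finset.univ \ (C ∪ D)) ∪ (C \ D) = Finset.univ \ D := by
      ext x; simp; tauto
    rw [hU]
    intro u hu v hv hadj
    simp only [Finset.mem_sdiff, Finset.mem_univ, true_and] at hu hv
    rcases hD hadj with h | h
    · exact hu h
    · exact hv h
  · intro u hu v hv hadj
    simp only [Finset.empty_union, Finset.mem_singleton] at hu hv
    subst hu; subst hv
    exact G.irrefl hadj
  · have : (D \ C).card = (C \ D).card := (Finset.card_sdiff_comm hcard).symm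
    rw [this]
    simp
end

section
/- Let G be a finite simple graph and let C be a minimum vertex cover of G. Then C is the unique minimum vertex cover of G if and only if for every nonempty independent set A ⊆ C one has |N_{V−C}(A)| > |A|. -/
open Finset

/-- `extNbr G C S` is N_{V−C}(S): the set of vertices outside `C` that are adjacent to
at least one vertex of `S`. -/
def extNbr {V : Type*} [Fintype V] [DecidableEq V] (G : SimpleGraph V) [DecidableRel G.Adj]
    (C S : Finset V) : Finset V :=
  Finset.univ.filter (fun v => v ∉ C ∧ ∃ s ∈ S, G.Adj s v)

/-- `C` is the unique minimum vertex cover of `G` iff every nonempty independent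
set `A ⊆ C` satisfies `|N_{V−C}(A)| > |A|`. -/
theorem unique_min_cover_iff {V : Type*} [Fintype V] [DecidableEq V]
    (G : SimpleGraph V) [DecidableRel G.Adj] (C : Finset V)
    (hC : IsCover G C) (hmin : C.card = coverNumber G) :
    (∀ D : Finset V, IsCover G D → D.card = coverNumber G → D = C) ↔
      (∀ A ⊆ C, A.Nonempty → IsIndep G A → A.card < (extNbr G C A).card) := by
  constructor
  · intro huniq A hA hAne hInd
    by_contra hle
    push_neg at hle
    set D := (C \ A) ∪ extNbr G C A with hD
    have hNsub : ∀ v ∈ extNbr G C A, v ∉ C := by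
      intro v hv
      simp only [extNbr, mem_filter] at hv
      exact hv.2.1
    have hDcover : IsCover G D := by
      intro u v hadj
      rcases hC hadj with hu | hv
      · by_cases huA : u ∈ A
        · by_cases hvC : v ∈ C
          · by_cases hvA : v ∈ A
            · exact absurd hadj (hInd huA hvA)
            · exact Or.inr (mem_union_left _ (mem_sdiff.2 ⟨hvC, hvA⟩))
          · refine Or.inr (mem_union_right _ ?_)
            simp only [extNbr, mem_filter, mem_univ, true_and]
            exact ⟨hvC, u, huA, hadj⟩
        · exact Or.inl (mem_union_left _ (mem_sdiff.2 ⟨hu, huA⟩))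
      · by_cases hvA : v ∈ A
        · by_cases huC : u ∈ C
          · by_cases huA : u ∈ A
            · exact absurd hadj (hInd huA hvA)
            · exact Or.inl (mem_union_left _ (mem_sdiff.2 ⟨huC, huA⟩))
          · refine Or.inl (mem_union_right _ ?_)
            simp only [extNbr, mem_filter, mem_univ, true_and]
            exact ⟨huC, v, hvA, hadj.symm⟩
        · exact Or.inr (mem_union_left _ (mem_sdiff.2 ⟨hv, hvA⟩))
    have hcardA : A.card ≤ C.card := card_le_card hA
    have hsd : (C \ A).card = C.card - A.card := card_sdiff_of_subset hA
    have hDle : D.card ≤ C.card := by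
      calc D.card ≤ (C \ A).card + (extNbr G C A).card := card_union_le _ _
        _ ≤ (C.card - A.card) + A.card := by omega
        _ = C.card := by omega
    have hge : coverNumber G ≤ D.card := Nat.sInf_le ⟨D, hDcover, rfl⟩
    have hDeq : D.card = coverNumber G := by omega
    have hDC := huniq D hDcover hDeq
    obtain ⟨a, ha⟩ := hAne
    have haD : a ∈ D := hDC ▸ hA ha
    rcases mem_union.1 haD with h | h
    · exact (mem_sdiff.1 h).2 ha
    · exact hNsub a h (hA ha)
  · intro hHall D hDcover hDcard
    set A := C \ D with hA
    have hDeqC : D.card = C.card := by rw [hDcard, hmin]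
    by_cases hne : A.Nonempty
    · exfalso
      have hInd : IsIndep G A := by
        intro u hu v hv hadj
        rcases hDcover hadj with h | h
        · exact (mem_sdiff.1 hu).2 h
        · exact (mem_sdiff.1 hv).2 h
      have hHA := hHall A sdiff_subset hne hInd
      have hsub : (C ∩ D) ∪ extNbr G C A ⊆ D := by
        intro v hv
        rcases mem_union.1 hv with h | h
        · exact (mem_inter.1 h).2
        · simp only [extNbr, mem_filter, mem_univ, true_and] at h
          obtain ⟨hvC, s, hsA, hadj⟩ := h
          rcases hDcover hadj with h' | h'
          · exact absurd h' (mem_sdiff.1 hsA).2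
          · exact h'
      have hdisj : Disjoint (C ∩ D) (extNbr G C A) := by
        rw [disjoint_left]
        intro v hv hv'
        simp only [extNbr, mem_filter] at hv'
        exact hv'.2.1 (mem_inter.1 hv).1
      have h1 : (C ∩ D).card + (extNbr G C A).card ≤ D.card := by
        rw [← card_union_of_disjoint hdisj]
        exact card_le_card hsub
      have h2 : (C \ D).card + (C ∩ D).card = C.card := by
        rw [← card_union_of_disjoint (disjoint_sdiff_inter C D), sdiff_union_inter]
      rw [← hA] at h2
      omega
    · rw [not_nonempty_iff_eq_empty, hA, sdiff_eq_empty_iff_subset] at hne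
      exact (eq_of_subset_of_card_le hne hDeqC.le).symm
end

section
/- If C is a minimum vertex cover of a finite simple graph G, then for every independent set A ⊆ C one has |N_{V−C}(A)| ≥ |A|. -/
open Finset

/-- If `C` is a minimum vertex cover of `G`, then every independent set `A ⊆ C`
satisfies `|N_{V−C}(A)| ≥ |A|`. -/
theorem card_le_card_extNbr {V : Type*} [Fintype V] [DecidableEq V]
    (G : SimpleGraph V) [DecidableRel G.Adj] (C : Finset V)
    (hC : IsCover G C) (hmin : C.card = coverNumber G) :
    ∀ A ⊆ C, IsIndep G A → A.card ≤ (extNbr G C A).card := by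
  intro A hA hind
  by_contra h
  push_neg at h
  set N := extNbr G C A with hNdef
  set C' := (C \ A) ∪ N with hC'def
  -- C' is a cover
  have key : ∀ ⦃u v : V⦄, G.Adj u v → u ∈ A → v ∈ C' := by
    intro u v huv huA
    have hvA : v ∉ A := fun hvA => hind huA hvA huv
    by_cases hvC : v ∈ C
    · exact mem_union_left _ (mem_sdiff.2 ⟨hvC, hvA⟩)
    · exact mem_union_right _ (by
        simp only [hNdef, extNbr, mem_filter, mem_univ, true_and]
        exact ⟨hvC, u, huA, huv⟩)
  have hcov : IsCover G C' := by
    intro u v huv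
    rcases hC huv with hu | hv
    · by_cases huA : u ∈ A
      · exact Or.inr (key huv huA)
      · exact Or.inl (mem_union_left _ (mem_sdiff.2 ⟨hu, huA⟩))
    · by_cases hvA : v ∈ A
      · exact Or.inl (key huv.symm hvA)
      · exact Or.inr (mem_union_left _ (mem_sdiff.2 ⟨hv, hvA⟩))
  have hcard : C'.card < C.card := by
    calc C'.card ≤ (C \ A).card + N.card := card_union_le _ _
      _ = C.card - A.card + N.card := by rw [card_sdiff_of_subset hA]
      _ < C.card - A.card + A.card := by omega
      _ = C.card := Nat.sub_add_cancel (card_le_card hA)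
  have hle : coverNumber G ≤ C'.card := Nat.sInf_le ⟨C', hcov, rfl⟩
  omega
end

section
/- Let G be a finite simple graph of class two and let C be a minimum vertex cover of G. Then for every nonempty independent set A ⊆ C one has |N_{V−C}(A)| > |A|. -/
open Finset

/-- If `G` is of class two and `C` is a minimum vertex cover, then every nonempty
independent set `A ⊆ C` satisfies `|N_{V−C}(A)| > |A|`. -/
theorem card_lt_card_extNbr_of_classTwo {V : Type*} [Fintype V] [DecidableEq V]
    (G : SimpleGraph V) [DecidableRel G.Adj] (C : Finset V)
    (hC : IsCover G C) (hmin : C.card = coverNumber G) (h2 : ClassTwo G) :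
    ∀ A ⊆ C, A.Nonempty → IsIndep G A → A.card < (extNbr G C A).card := by
  intro A hAC hAne hAind
  by_contra hle
  push_neg at hle
  apply h2
  set N := extNbr G C A with hN
  have hNsub : N ⊆ univ \ C := by
    intro v hv
    simp only [hN, extNbr, mem_filter] at hv
    simp [hv.2.1]
  have hU : ((univ \ C) \ N) ∪ ∅ ∪ N = univ \ C := by
    rw [union_empty, sdiff_union_of_subset hNsub]
  have hCC : univ \ (univ \ C) = C := by
    simp [Finset.sdiff_sdiff_eq_self (subset_univ C)]
  have hindepVC : IsIndep G (univ \ C) := by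
    intro u hu v hv hadj
    rcases hC hadj with h | h
    · exact (mem_sdiff.mp hu).2 h
    · exact (mem_sdiff.mp hv).2 h
  refine ⟨(univ \ C) \ N, ∅, N, A, A, ?_, ?_, ?_, ?_, hAne, hAne, ?_, ?_, ?_, ?_, ?_, ?_⟩
  · exact disjoint_empty_right _
  · exact sdiff_disjoint
  · exact disjoint_empty_left _
  · rw [hU]; exact hindepVC
  · rw [hU, hCC]; exact hAC
  · rw [hU, hCC]; exact hAC
  · rw [hU, hCC, hmin]
  · intro u hu v hv hadj
    rcases mem_union.mp hu with hu1 | huA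
    · rcases mem_union.mp hv with hv1 | hvA
      · exact hindepVC (sdiff_subset hu1) (sdiff_subset hv1) hadj
      · have : u ∈ N := by
          simp only [hN, extNbr, mem_filter]
          exact ⟨mem_univ u, (mem_sdiff.mp (sdiff_subset hu1)).2,
            v, hvA, hadj.symm⟩
        exact (mem_sdiff.mp hu1).2 this
    · rcases mem_union.mp hv with hv1 | hvA
      · have : v ∈ N := by
          simp only [hN, extNbr, mem_filter]
          exact ⟨mem_univ v, (mem_sdiff.mp (sdiff_subset hv1)).2,
            u, huA, hadj⟩
        exact (mem_sdiff.mp hv1).2 this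
      · exact hAind huA hvA hadj
  · intro u hu v hv hadj
    rw [empty_union] at hu hv
    exact hAind hu hv hadj
  · exact le_trans hle (Nat.le_add_right _ _)
end

section
/- Let G be a finite simple graph of class two and let C be a minimum vertex cover of G. Then for every nonempty independent set A ⊆ C one has |N_{V−C}(A)| > 2|A|. -/
open Finset

/-- If `G` is of class two and `C` is a minimum vertex cover, then every nonempty
independent set `A ⊆ C` satisfies `|N_{V−C}(A)| > 2|A|`. -/
theorem two_mul_card_lt_card_extNbr_of_classTwo {V : Type*} [Fintype V] [DecidableEq V]
    (G : SimpleGraph V) [DecidableRel G.Adj] (C : Finset V)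
    (hC : IsCover G C) (hmin : C.card = coverNumber G) (h2 : ClassTwo G) :
    ∀ A ⊆ C, A.Nonempty → IsIndep G A → 2 * A.card < (extNbr G C A).card := by
  intro A hAC hA hInd
  by_contra hlt
  push_neg at hlt
  set N := extNbr G C A with hN
  have hNsub : N ⊆ Finset.univ \ C := by
    intro v hv
    simp only [hN, extNbr, mem_filter] at hv
    simp [hv.2.1]
  have hXeq : ((Finset.univ \ C) \ N ∪ ∅ ∪ N) = Finset.univ \ C := by
    rw [union_empty, sdiff_union_of_subset hNsub]
  have hcompl : Finset.univ \ (Finset.univ \ C) = C := by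
    rw [sdiff_sdiff_self_left, univ_inter]
  have hIndVC : IsIndep G (Finset.univ \ C) := by
    intro u hu v hv hadj
    rcases hC hadj with h | h
    · exact (mem_sdiff.1 hu).2 h
    · exact (mem_sdiff.1 hv).2 h
  have hX1sub : (Finset.univ \ C) \ N ⊆ Finset.univ \ C := sdiff_subset
  have hIndX1A : IsIndep G ((Finset.univ \ C) \ N ∪ A) := by
    intro u hu v hv hadj
    rcases mem_union.1 hu with hu1 | hu2 <;> rcases mem_union.1 hv with hv1 | hv2
    · exact hIndVC (hX1sub hu1) (hX1sub hv1) hadj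
    · have : u ∈ N := by
        simp only [hN, extNbr, mem_filter]
        exact ⟨mem_univ u, (mem_sdiff.1 (hX1sub hu1)).2, v, hv2, hadj.symm⟩
      exact (mem_sdiff.1 hu1).2 this
    · have : v ∈ N := by
        simp only [hN, extNbr, mem_filter]
        exact ⟨mem_univ v, (mem_sdiff.1 (hX1sub hv1)).2, u, hu2, hadj⟩
      exact (mem_sdiff.1 hv1).2 this
    · exact hInd hu2 hv2 hadj
  apply h2
  refine ⟨(Finset.univ \ C) \ N, ∅, N, A, A, disjoint_empty_right _, sdiff_disjoint,
    disjoint_empty_left _, ?_, hA, hA, ?_, ?_, ?_, hIndX1A, ?_, ?_⟩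
  · rw [hXeq]; exact hIndVC
  · rw [hXeq, hcompl]; exact hAC
  · rw [hXeq, hcompl]; exact hAC
  · rw [hXeq, hcompl, hmin]
  · intro u hu v hv hadj
    rw [empty_union] at hu hv
    exact hInd hu hv hadj
  · omega
end

section
/- Let G be a finite simple claw-free graph with at least one edge. Then G is of class one. -/
open Finset

/-- A finite simple claw-free graph with at least one edge is of class one. -/
theorem classOne_of_clawFree {V : Type*} [Fintype V] [DecidableEq V]
    (G : SimpleGraph V) (hedge : ∃ u v, G.Adj u v)
    (hclawfree : ¬ ∃ v a b c : V, a ≠ b ∧ a ≠ c ∧ b ≠ c ∧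
      G.Adj v a ∧ G.Adj v b ∧ G.Adj v c ∧ ¬ G.Adj a b ∧ ¬ G.Adj a c ∧ ¬ G.Adj b c) :
    ClassOne G := by
  classical
  have hSne : ∃ C : Finset V, IsCover G C ∧ C.card = coverNumber G := by
    have : coverNumber G ∈ {n : ℕ | ∃ C : Finset V, IsCover G C ∧ C.card = n} :=
      Nat.sInf_mem ⟨(Finset.univ : Finset V).card, Finset.univ,
        fun u v _ => Or.inl (mem_univ u), rfl⟩
    exact this
  obtain ⟨C, hC, hCcard⟩ := hSne
  obtain ⟨u, v, huv⟩ := hedge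
  have hy : ∃ y, y ∈ C := by
    rcases hC huv with h | h
    · exact ⟨u, h⟩
    · exact ⟨v, h⟩
  obtain ⟨y, hyC⟩ := hy
  set X : Finset V := Finset.univ \ C with hX
  have hXindep : IsIndep G X := by
    intro a ha b hb hab
    rcases hC hab with h | h
    · exact (mem_sdiff.mp ha).2 h
    · exact (mem_sdiff.mp hb).2 h
  set N : Finset V := X.filter (fun x => G.Adj y x) with hNdef
  have hNsub : N ⊆ X := filter_subset _ _
  have hN2 : N.card ≤ 2 := by
    by_contra h
    push_neg at h
    obtain ⟨a, ha, b, hb, c, hc, hab, hac, hbc⟩ := Finset.two_lt_card.mp h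
    have haX := mem_filter.mp ha
    have hbX := mem_filter.mp hb
    have hcX := mem_filter.mp hc
    exact hclawfree ⟨y, a, b, c, hab, hac, hbc, haX.2, hbX.2, hcX.2,
      hXindep haX.1 hbX.1, hXindep haX.1 hcX.1, hXindep hbX.1 hcX.1⟩
  have hUnion : (X \ N) ∪ ∅ ∪ N = X := by
    rw [union_empty, sdiff_union_of_subset hNsub]
  have hcompl : Finset.univ \ X = C := by
    rw [hX, sdiff_sdiff_self_left, univ_inter]
  refine ⟨X \ N, ∅, N, {y}, {y}, disjoint_empty_right _, sdiff_disjoint,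
    disjoint_empty_left _, ?_, singleton_nonempty y, singleton_nonempty y, ?_, ?_, ?_, ?_, ?_, ?_⟩
  · rw [hUnion]; exact hXindep
  · rw [hUnion, hcompl]; exact singleton_subset_iff.mpr hyC
  · rw [hUnion, hcompl]; exact singleton_subset_iff.mpr hyC
  · rw [hUnion, hcompl, hCcard]
  · intro a ha b hb hab
    rcases mem_union.mp ha with ha' | ha' <;> rcases mem_union.mp hb with hb' | hb'
    · exact hXindep (mem_sdiff.mp ha').1 (mem_sdiff.mp hb').1 hab
    · have hbey : b = y := mem_singleton.mp hb'
      subst hbey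
      have := mem_sdiff.mp ha'
      exact this.2 (mem_filter.mpr ⟨this.1, hab.symm⟩)
    · have haey : a = y := mem_singleton.mp ha'
      subst haey
      have := mem_sdiff.mp hb'
      exact this.2 (mem_filter.mpr ⟨this.1, hab⟩)
    · rw [mem_singleton.mp ha', mem_singleton.mp hb'] at hab
      exact G.irrefl hab
  · intro a ha b hb hab
    rw [empty_union, mem_singleton] at ha hb
    rw [ha, hb] at hab
    exact G.irrefl hab
  · simpa using hN2
end

section
/- Let G be a finite simple graph and let C be a minimum vertex cover of G. Then G is of class two if and only if for any two nonempty independent sets S, T ⊆ C one has |N_{V−C}(S) ∩ N_{V−C}(T)| > |S| + |T|. -/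
open Finset

section Aux

variable {V : Type*} [Fintype V] [DecidableEq V] (G : SimpleGraph V) [DecidableRel G.Adj]

lemma mem_extNbr {C S : Finset V} {v : V} :
    v ∈ extNbr G C S ↔ v ∉ C ∧ ∃ s ∈ S, G.Adj s v := by
  simp [extNbr]

variable {G}

lemma isIndep_mono {A B : Finset V} (h : A ⊆ B) (hB : IsIndep G B) : IsIndep G A :=
  fun _ hu _ hv => hB (h hu) (h hv)

lemma isIndep_union {A B : Finset V} (hA : IsIndep G A) (hB : IsIndep G B)
    (hAB : ∀ a ∈ A, ∀ b ∈ B, ¬ G.Adj a b) : IsIndep G (A ∪ B) := by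
  intro u hu v hv hadj
  rcases mem_union.1 hu with hu' | hu' <;> rcases mem_union.1 hv with hv' | hv'
  · exact hA hu' hv' hadj
  · exact hAB u hu' v hv' hadj
  · exact hAB v hv' u hu' hadj.symm
  · exact hB hu' hv' hadj

/-- The complement of a vertex cover is independent. -/
lemma isIndep_compl_of_cover {C : Finset V} (hC : IsCover G C) :
    IsIndep G (univ \ C) := by
  intro u hu v hv hadj
  rcases hC hadj with h | h
  · exact (mem_sdiff.1 hu).2 h
  · exact (mem_sdiff.1 hv).2 h

/-- The complement of an independent set is a vertex cover. -/
lemma isCover_compl_of_indep {X : Finset V} (hX : IsIndep G X) :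
    IsCover G (univ \ X) := by
  intro u v hadj
  by_contra hcon
  push_neg at hcon
  obtain ⟨hu, hv⟩ := hcon
  have hu' : u ∈ X := by
    by_contra h; exact hu (mem_sdiff.2 ⟨mem_univ _, h⟩)
  have hv' : v ∈ X := by
    by_contra h; exact hv (mem_sdiff.2 ⟨mem_univ _, h⟩)
  exact hX hu' hv' hadj

lemma coverNumber_le_card {C : Finset V} (hC : IsCover G C) :
    coverNumber G ≤ C.card :=
  Nat.sInf_le ⟨C, hC, rfl⟩

/-- Construction: a witness pair `(S, T)` in a cover `C` of size `β` yields a feasible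
schedule with boat capacity `|C|`. -/
lemma feasible_of_witness {C S T : Finset V} (hC : IsCover G C)
    (hS : S ⊆ C) (hT : T ⊆ C) (hSne : S.Nonempty) (hTne : T.Nonempty)
    (hSi : IsIndep G S) (hTi : IsIndep G T)
    (hcard : (extNbr G C S ∩ extNbr G C T).card ≤ S.card + T.card) :
    Feasible G C.card := by
  set NS := extNbr G C S with hNS
  set NT := extNbr G C T with hNT
  set Xs : Finset V := univ \ C with hXs
  refine ⟨Xs \ NS, (Xs ∩ NS) \ NT, NS ∩ NT, S, T, ?_, ?_, ?_, ?_, ?_, ?_, ?_, ?_, ?_, ?_, ?_, ?_⟩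
  case refine_1 =>
    refine disjoint_left.2 fun a ha ha' => ?_
    exact (mem_sdiff.1 ha).2 (mem_inter.1 (mem_sdiff.1 ha').1).2
  case refine_2 =>
    refine disjoint_left.2 fun a ha ha' => ?_
    exact (mem_sdiff.1 ha).2 (mem_inter.1 ha').1
  case refine_3 =>
    refine disjoint_left.2 fun a ha ha' => ?_
    exact (mem_sdiff.1 ha).2 (mem_inter.1 ha').2
  all_goals
    have hunion : Xs \ NS ∪ (Xs ∩ NS) \ NT ∪ NS ∩ NT = Xs := by
      ext v
      simp only [mem_union, mem_sdiff, mem_inter]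
      constructor
      · rintro ((⟨h, _⟩ | ⟨⟨h, _⟩, _⟩) | ⟨h, _⟩)
        · exact h
        · exact h
        · rw [hXs, mem_sdiff]
          exact ⟨mem_univ _, (mem_extNbr G (S := S)).1 h |>.1⟩
      · intro hv
        by_cases h1 : v ∈ NS
        · by_cases h2 : v ∈ NT
          · exact Or.inr ⟨h1, h2⟩
          · exact Or.inl (Or.inr ⟨⟨hv, h1⟩, h2⟩)
        · exact Or.inl (Or.inl ⟨hv, h1⟩)
    have hcompl : univ \ (Xs \ NS ∪ (Xs ∩ NS) \ NT ∪ NS ∩ NT) = C := by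
      rw [hunion, hXs, sdiff_sdiff_self_left, univ_inter]
  case refine_4 =>
    rw [hunion]
    exact isIndep_compl_of_cover hC
  case refine_5 => exact hSne
  case refine_6 => exact hTne
  case refine_7 => rw [hcompl]; exact hS
  case refine_8 => rw [hcompl]; exact hT
  case refine_9 => rw [hcompl]
  case refine_10 =>
    refine isIndep_union (isIndep_mono (fun a ha => ?_) (isIndep_compl_of_cover hC)) hSi ?_
    · exact (mem_sdiff.1 ha).1
    · intro a ha s hs hadj
      rcases mem_sdiff.1 ha with ⟨haXs, haNS⟩
      exact haNS ((mem_extNbr G).2 ⟨(mem_sdiff.1 haXs).2, s, hs, hadj.symm⟩)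
  case refine_11 =>
    refine isIndep_union (isIndep_mono (fun a ha => ?_) (isIndep_compl_of_cover hC)) hTi ?_
    · exact (mem_inter.1 (mem_sdiff.1 ha).1).1
    · intro a ha t ht hadj
      rcases mem_sdiff.1 ha with ⟨haXs, haNT⟩
      exact haNT ((mem_extNbr G).2
        ⟨(mem_sdiff.1 (mem_inter.1 haXs).1).2, t, ht, hadj.symm⟩)
  case refine_12 => exact hcard

/-- Extraction: from a feasible schedule with boat capacity β(G) and a minimum cover `C`,
produce a witness pair in `C`. -/
lemma witness_of_feasible {C : Finset V} (hC : IsCover G C)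
    (hmin : C.card = coverNumber G) (hf : Feasible G (coverNumber G)) :
    ∃ S T : Finset V, S ⊆ C ∧ T ⊆ C ∧ S.Nonempty ∧ T.Nonempty ∧
      IsIndep G S ∧ IsIndep G T ∧
      (extNbr G C S ∩ extNbr G C T).card ≤ S.card + T.card := by
  obtain ⟨X₁, X₂, X₃, Y₁, Y₂, -, -, -, hXind, hY₁ne, hY₂ne, hY₁sub, hY₂sub, hYcard,
    hI₁, hI₂, hX₃⟩ := hf
  set X : Finset V := X₁ ∪ X₂ ∪ X₃ with hX
  -- cardinality facts
  have hXcard : (univ \ C).card ≤ X.card := by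
    have h1 : (univ \ X).card = Fintype.card V - X.card := by
      rw [card_sdiff_of_subset (subset_univ _), card_univ]
    have h2 : (univ \ C).card = Fintype.card V - C.card := by
      rw [card_sdiff_of_subset (subset_univ _), card_univ]
    have h3 : X.card ≤ Fintype.card V := by
      rw [← card_univ]; exact card_le_card (subset_univ _)
    have h4 : C.card ≤ Fintype.card V := by
      rw [← card_univ]; exact card_le_card (subset_univ _)
    have h5 : (univ \ X).card ≤ C.card := by rw [hmin]; exact hYcard
    omega
  by_cases hScase : (X ∩ C).Nonempty
  · -- Case (b): X meets C; S = T = X ∩ C works.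
    refine ⟨X ∩ C, X ∩ C, inter_subset_right, inter_subset_right, hScase, hScase,
      isIndep_mono inter_subset_left hXind, isIndep_mono inter_subset_left hXind, ?_⟩
    rw [inter_self]
    have hsub : extNbr G C (X ∩ C) ⊆ (univ \ C) \ X := by
      intro v hv
      rcases (mem_extNbr G).1 hv with ⟨hvC, s, hs, hadj⟩
      refine mem_sdiff.2 ⟨mem_sdiff.2 ⟨mem_univ _, hvC⟩, fun hvX => ?_⟩
      exact hXind (mem_inter.1 hs).1 hvX hadj
    have h6 : ((univ \ C) \ X).card + ((univ \ C) ∩ X).card = (univ \ C).card :=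
      card_sdiff_add_card_inter _ _
    have h7 : (univ \ C) ∩ X = X \ C := by
      ext v; simp only [mem_inter, mem_sdiff, mem_univ, true_and]; tauto
    have h8 : (X ∩ C).card + (X \ C).card = X.card := card_inter_add_card_sdiff X C
    have h9 : (X \ C).card ≤ (univ \ C).card := by
      refine card_le_card fun v hv => ?_
      rcases mem_sdiff.1 hv with ⟨_, hvC⟩
      exact mem_sdiff.2 ⟨mem_univ _, hvC⟩
    calc (extNbr G C (X ∩ C)).card ≤ ((univ \ C) \ X).card := card_le_card hsub
      _ ≤ (X ∩ C).card + (X ∩ C).card := by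
          rw [h7] at h6; omega
  · -- Case (a): X ∩ C = ∅, so X = univ \ C and the cover is exactly C.
    have hXsub : X ⊆ univ \ C := by
      intro v hv
      refine mem_sdiff.2 ⟨mem_univ _, fun hvC => ?_⟩
      exact hScase ⟨v, mem_inter.2 ⟨hv, hvC⟩⟩
    have hXeq : X = univ \ C := eq_of_subset_of_card_le hXsub hXcard
    have hYeq : univ \ X = C := by
      rw [hXeq, sdiff_sdiff_self_left, univ_inter]
    refine ⟨Y₁, Y₂, ?_, ?_, hY₁ne, hY₂ne,
      isIndep_mono subset_union_right hI₁, isIndep_mono subset_union_right hI₂, ?_⟩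
    · rw [← hYeq]; exact hY₁sub
    · rw [← hYeq]; exact hY₂sub
    · refine le_trans (le_trans (card_le_card ?_) (le_refl X₃.card)) hX₃
      intro v hv
      rcases mem_inter.1 hv with ⟨hv1, hv2⟩
      rcases (mem_extNbr G).1 hv1 with ⟨hvC, s, hs, hadj⟩
      rcases (mem_extNbr G).1 hv2 with ⟨-, t, ht, hadj'⟩
      have hvX : v ∈ X := by
        rw [hXeq]; exact mem_sdiff.2 ⟨mem_univ _, hvC⟩
      rcases mem_union.1 hvX with hvX' | hvX'
      · rcases mem_union.1 hvX' with hvX'' | hvX''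
        · exact absurd hadj.symm (hI₁ (mem_union.2 (Or.inl hvX''))
            (mem_union.2 (Or.inr hs)) )
        · exact absurd hadj'.symm (hI₂ (mem_union.2 (Or.inl hvX''))
            (mem_union.2 (Or.inr ht)))
      · exact hvX'

end Aux

/-- Classification theorem: for a minimum vertex cover `C` of `G`, the graph `G` is of
class two iff for any two nonempty independent sets `S, T ⊆ C` one has
`|N_{V−C}(S) ∩ N_{V−C}(T)| > |S| + |T|`. -/
theorem classTwo_iff {V : Type*} [Fintype V] [DecidableEq V]
    (G : SimpleGraph V) [DecidableRel G.Adj] (C : Finset V)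
    (hC : IsCover G C) (hmin : C.card = coverNumber G) :
    ClassTwo G ↔
      ∀ S ⊆ C, ∀ T ⊆ C, S.Nonempty → T.Nonempty → IsIndep G S → IsIndep G T →
        S.card + T.card < (extNbr G C S ∩ extNbr G C T).card := by
  constructor
  · intro h2 S hS T hT hSne hTne hSi hTi
    by_contra hlt
    push_neg at hlt
    have hfeas : Feasible G C.card :=
      feasible_of_witness hC hS hT hSne hTne hSi hTi hlt
    rw [hmin] at hfeas
    exact h2 hfeas
  · intro hexp hone
    obtain ⟨S, T, hS, hT, hSne, hTne, hSi, hTi, hcard⟩ :=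
      witness_of_feasible hC hmin hone
    exact absurd (hexp S hS T hT hSne hTne hSi hTi) (not_lt.2 hcard)
end

section
/- Let G be a finite simple graph with a minimum vertex cover C, and suppose there exist two (not necessarily distinct) vertices u, v ∈ C that have at most two common neighbors in V(G) − C. Then G is of class one. -/
open Finset

/-- If a minimum vertex cover `C` contains two (not necessarily distinct) vertices with at
most two common neighbors in `V − C`, then `G` is of class one. -/
theorem classOne_of_few_common_neighbors {V : Type*} [Fintype V] [DecidableEq V]
    (G : SimpleGraph V) [DecidableRel G.Adj] (C : Finset V)
    (hC : IsCover G C) (hmin : C.card = coverNumber G)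
    (u v : V) (hu : u ∈ C) (hv : v ∈ C)
    (hcommon : (Finset.univ.filter (fun w => w ∉ C ∧ G.Adj u w ∧ G.Adj v w)).card ≤ 2) :
    ClassOne G := by
  classical
  set X₁ : Finset V := (univ \ C).filter (fun w => ¬ G.Adj u w) with hX1
  set X₂ : Finset V := (univ \ C).filter (fun w => G.Adj u w ∧ ¬ G.Adj v w) with hX2
  set X₃ : Finset V := (univ \ C).filter (fun w => G.Adj u w ∧ G.Adj v w) with hX3
  have hXunion : X₁ ∪ X₂ ∪ X₃ = univ \ C := by
    ext w
    simp only [hX1, hX2, hX3, mem_union, mem_filter, mem_sdiff, mem_univ, true_and]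
    tauto
  have hWindep : ∀ ⦃a : V⦄, a ∉ C → ∀ ⦃b : V⦄, b ∉ C → ¬ G.Adj a b := by
    intro a ha b hb hab
    rcases hC hab with h | h <;> [exact ha h; exact hb h]
  refine ⟨X₁, X₂, X₃, {u}, {v}, ?_, ?_, ?_, ?_, ⟨u, mem_singleton_self u⟩,
    ⟨v, mem_singleton_self v⟩, ?_, ?_, ?_, ?_, ?_, ?_⟩
  · rw [disjoint_left]
    intro a ha hb
    simp only [hX1, hX2, mem_filter] at ha hb
    exact ha.2 hb.2.1
  · rw [disjoint_left]
    intro a ha hb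
    simp only [hX1, hX3, mem_filter] at ha hb
    exact ha.2 hb.2.1
  · rw [disjoint_left]
    intro a ha hb
    simp only [hX2, hX3, mem_filter] at ha hb
    exact ha.2.2 hb.2.2
  · rw [hXunion]
    intro a ha b hb
    rw [mem_sdiff] at ha hb
    exact hWindep ha.2 hb.2
  · rw [hXunion]
    intro a ha
    rw [mem_singleton] at ha
    subst ha
    simp [hu]
  · rw [hXunion]
    intro a ha
    rw [mem_singleton] at ha
    subst ha
    simp [hv]
  · rw [hXunion, sdiff_sdiff_self_left, univ_inter, hmin]
  · intro a ha b hb hab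
    rcases mem_union.mp ha with ha | ha <;> rcases mem_union.mp hb with hb | hb
    · simp only [hX1, mem_filter, mem_sdiff] at ha hb
      exact hWindep ha.1.2 hb.1.2 hab
    · rw [mem_singleton] at hb; subst hb
      simp only [hX1, mem_filter] at ha
      exact ha.2 hab.symm
    · rw [mem_singleton] at ha; subst ha
      simp only [hX1, mem_filter] at hb
      exact hb.2 hab
    · rw [mem_singleton] at ha hb; subst ha; subst hb
      exact G.loopless.irrefl _ hab
  · intro a ha b hb hab
    rcases mem_union.mp ha with ha | ha <;> rcases mem_union.mp hb with hb | hb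
    · simp only [hX2, mem_filter, mem_sdiff] at ha hb
      exact hWindep ha.1.2 hb.1.2 hab
    · rw [mem_singleton] at hb; subst hb
      simp only [hX2, mem_filter] at ha
      exact ha.2.2 hab.symm
    · rw [mem_singleton] at ha; subst ha
      simp only [hX2, mem_filter] at hb
      exact hb.2.2 hab
    · rw [mem_singleton] at ha hb; subst ha; subst hb
      exact G.loopless.irrefl _ hab
  · have : X₃ = univ.filter (fun w => w ∉ C ∧ G.Adj u w ∧ G.Adj v w) := by
      ext w
      simp only [hX3, mem_filter, mem_sdiff, mem_univ, true_and]
    rw [this]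
    simpa using hcommon
end

section
/- Let G be a finite simple graph of class two with β(G) ≥ 2. Then the girth of G is at most 4. -/
open Finset

/-- A class-two graph with vertex cover number at least 2 has girth at most 4. -/
theorem girth_le_four_of_classTwo {V : Type*} [Fintype V] [DecidableEq V]
    (G : SimpleGraph V) (h2 : ClassTwo G) (hβ : 2 ≤ coverNumber G) :
    G.girth ≤ 4 := by
  classical
  by_contra hg
  push_neg at hg
  apply h2
  -- obtain a minimum vertex cover
  have hne : {n : ℕ | ∃ C : Finset V, IsCover G C ∧ C.card = n}.Nonempty :=
    ⟨Finset.univ.card, Finset.univ, fun u v _ => Or.inl (mem_univ u), rfl⟩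
  obtain ⟨C, hC, hcard⟩ := Nat.sInf_mem hne
  have hcard' : C.card = coverNumber G := hcard
  have hC2 : 1 < C.card := by omega
  obtain ⟨y, hy, y', hy', hyy'⟩ := Finset.one_lt_card.mp hC2
  set X : Finset V := Finset.univ \ C with hX
  have hXindep : IsIndep G X := by
    intro u hu v hv hadj
    rcases hC hadj with h | h
    · exact (Finset.mem_sdiff.mp hu).2 h
    · exact (Finset.mem_sdiff.mp hv).2 h
  have hun : X.filter (fun x => ¬ G.Adj y x) ∪ X.filter (fun x => G.Adj y x ∧ ¬ G.Adj y' x)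
      ∪ X.filter (fun x => G.Adj y x ∧ G.Adj y' x) = X := by
    ext a; simp only [Finset.mem_union, Finset.mem_filter]; tauto
  have hcompl : Finset.univ \ (X.filter (fun x => ¬ G.Adj y x)
      ∪ X.filter (fun x => G.Adj y x ∧ ¬ G.Adj y' x)
      ∪ X.filter (fun x => G.Adj y x ∧ G.Adj y' x)) = C := by
    rw [hun, hX, Finset.sdiff_sdiff_eq_self (Finset.subset_univ C)]
  refine ⟨X.filter (fun x => ¬ G.Adj y x),
    X.filter (fun x => G.Adj y x ∧ ¬ G.Adj y' x),
    X.filter (fun x => G.Adj y x ∧ G.Adj y' x), {y}, {y'}, ?_, ?_, ?_, ?_, ?_, ?_, ?_, ?_, ?_, ?_, ?_, ?_⟩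
  · rw [Finset.disjoint_left]; intro a ha ha'
    exact (Finset.mem_filter.mp ha).2 (Finset.mem_filter.mp ha').2.1
  · rw [Finset.disjoint_left]; intro a ha ha'
    exact (Finset.mem_filter.mp ha).2 (Finset.mem_filter.mp ha').2.1
  · rw [Finset.disjoint_left]; intro a ha ha'
    exact (Finset.mem_filter.mp ha).2.2 (Finset.mem_filter.mp ha').2.2
  · rw [hun]; exact hXindep
  · exact ⟨y, Finset.mem_singleton_self y⟩
  · exact ⟨y', Finset.mem_singleton_self y'⟩
  · rw [hcompl]; exact Finset.singleton_subset_iff.mpr hy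
  · rw [hcompl]; exact Finset.singleton_subset_iff.mpr hy'
  · rw [hcompl]; exact le_of_eq hcard'
  · intro u hu v hv hadj
    rcases Finset.mem_union.mp hu with hu | hu <;>
      rcases Finset.mem_union.mp hv with hv | hv
    · exact hXindep (Finset.filter_subset _ _ hu) (Finset.filter_subset _ _ hv) hadj
    · rw [Finset.mem_singleton] at hv; subst hv
      exact (Finset.mem_filter.mp hu).2 hadj.symm
    · rw [Finset.mem_singleton] at hu; subst hu
      exact (Finset.mem_filter.mp hv).2 hadj
    · rw [Finset.mem_singleton] at hu hv; subst hu; subst hv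
      exact G.irrefl hadj
  · intro u hu v hv hadj
    rcases Finset.mem_union.mp hu with hu | hu <;>
      rcases Finset.mem_union.mp hv with hv | hv
    · exact hXindep (Finset.filter_subset _ _ hu) (Finset.filter_subset _ _ hv) hadj
    · rw [Finset.mem_singleton] at hv; subst hv
      exact (Finset.mem_filter.mp hu).2.2 hadj.symm
    · rw [Finset.mem_singleton] at hu; subst hu
      exact (Finset.mem_filter.mp hv).2.2 hadj
    · rw [Finset.mem_singleton] at hu hv; subst hu; subst hv
      exact G.irrefl hadj
  · rw [Finset.card_singleton, Finset.card_singleton]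
    refine le_trans (Finset.card_le_one.mpr ?_) (by norm_num)
    intro z₁ hz₁ z₂ hz₂
    by_contra hzz
    obtain ⟨-, hyz₁, hy'z₁⟩ := Finset.mem_filter.mp hz₁
    obtain ⟨-, hyz₂, hy'z₂⟩ := Finset.mem_filter.mp hz₂
    -- build a 4-cycle y - z₁ - y' - z₂ - y
    let w : G.Walk y y :=
      .cons hyz₁ (.cons (hy'z₁.symm) (.cons hy'z₂ (.cons hyz₂.symm .nil)))
    have hcyc : w.IsCycle := by
      simp [w, SimpleGraph.Walk.isCycle_def, SimpleGraph.Walk.isTrail_def,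
        hyz₁.ne, hyz₂.ne, hy'z₁.ne, hy'z₂.ne, hyz₁.ne', hyz₂.ne', hy'z₁.ne', hy'z₂.ne', hyy', hzz, Ne.symm hyy',
        (fun h => hzz h.symm : ¬ z₂ = z₁), Sym2.eq, Sym2.rel_iff]
    have h4 : G.egirth ≤ (w.length : ℕ∞) :=
      le_trans (iInf_le _ y) (le_trans (iInf_le _ w) (iInf_le _ hcyc))
    have hlen : w.length = 4 := rfl
    have : G.girth ≤ 4 := by
      have := ENat.toNat_le_toNat h4 (by simp)
      simpa [SimpleGraph.girth, hlen] using this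
    omega
end

section
/- Let T be a finite tree (a connected acyclic simple graph) with at least one edge. Then T is of class two if and only if there exists n ≥ 3 such that T is isomorphic to the star K_{1,n} (the complete bipartite graph with parts of sizes 1 and n). -/
open Finset

section Helpers

variable {V : Type*} [Fintype V] [DecidableEq V] (T : SimpleGraph V)

lemma exists_min_cover : ∃ C : Finset V, IsCover T C ∧ C.card = coverNumber T := by
  have hne : {n : ℕ | ∃ C : Finset V, IsCover T C ∧ C.card = n}.Nonempty :=
    ⟨(Finset.univ : Finset V).card, Finset.univ,
      fun u _ _ => Or.inl (Finset.mem_univ u), rfl⟩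
  exact Nat.sInf_mem hne

lemma coverNumber_le {C : Finset V} (hC : IsCover T C) : coverNumber T ≤ C.card :=
  Nat.sInf_le ⟨C, hC, rfl⟩

lemma one_le_coverNumber (hedge : ∃ u v, T.Adj u v) : 1 ≤ coverNumber T := by
  obtain ⟨C, hC, hcard⟩ := exists_min_cover T
  obtain ⟨u, v, huv⟩ := hedge
  have hne : C.Nonempty := by
    rcases hC huv with h | h
    exacts [⟨u, h⟩, ⟨v, h⟩]
  have := Finset.card_pos.mpr hne
  omega

/-- In an acyclic graph, two distinct vertices have at most one common neighbor. -/
lemma acyclic_common_neighbor {T : SimpleGraph V} (hac : T.IsAcyclic)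
    {y₁ y₂ a b : V} (hy : y₁ ≠ y₂) (ha1 : T.Adj a y₁) (ha2 : T.Adj a y₂)
    (hb1 : T.Adj b y₁) (hb2 : T.Adj b y₂) : a = b := by
  have hpu := SimpleGraph.isAcyclic_iff_path_unique.mp hac
  have hpa : (SimpleGraph.Walk.cons ha1.symm
      (SimpleGraph.Walk.cons ha2 SimpleGraph.Walk.nil)).IsPath := by
    simp [SimpleGraph.Walk.isPath_def, ha1.ne', ha2.ne, hy, ha1.ne]
  have hpb : (SimpleGraph.Walk.cons hb1.symm
      (SimpleGraph.Walk.cons hb2 SimpleGraph.Walk.nil)).IsPath := by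
    simp [SimpleGraph.Walk.isPath_def, hb1.ne', hb2.ne, hy, hb1.ne]
  have heq := hpu ⟨_, hpa⟩ ⟨_, hpb⟩
  have hsup := congrArg (fun p : T.Path y₁ y₂ => (p : T.Walk y₁ y₂).support) heq
  simpa using hsup

/-- A graph whose cover number is at least 2 is of class one, provided it is acyclic. -/
lemma classOne_of_two_le {T : SimpleGraph V} (hac : T.IsAcyclic)
    (h2 : 2 ≤ coverNumber T) : ClassOne T := by
  classical
  obtain ⟨C, hC, hcard⟩ := exists_min_cover T
  obtain ⟨y₁, hy₁, y₂, hy₂, hne⟩ := Finset.one_lt_card.mp (by omega : 1 < C.card)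
  set X : Finset V := Finset.univ \ C with hX
  set X₁ : Finset V := X.filter (fun x => ¬ T.Adj x y₁) with hX₁
  set X₂ : Finset V := X.filter (fun x => T.Adj x y₁ ∧ ¬ T.Adj x y₂) with hX₂
  set X₃ : Finset V := X.filter (fun x => T.Adj x y₁ ∧ T.Adj x y₂) with hX₃
  have hunion : X₁ ∪ X₂ ∪ X₃ = X := by
    ext x
    simp only [hX₁, hX₂, hX₃, Finset.mem_union, Finset.mem_filter]
    tauto
  have hXindep : IsIndep T X := by
    intro u hu v hv hadj
    rw [hX, Finset.mem_sdiff] at hu hv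
    rcases hC hadj with h | h
    exacts [hu.2 h, hv.2 h]
  have hcomp : Finset.univ \ (X₁ ∪ X₂ ∪ X₃) = C := by
    rw [hunion, hX]; simp
  refine ⟨X₁, X₂, X₃, {y₁}, {y₂}, ?_, ?_, ?_, ?_, ⟨y₁, Finset.mem_singleton_self y₁⟩,
    ⟨y₂, Finset.mem_singleton_self y₂⟩, ?_, ?_, ?_, ?_, ?_, ?_⟩
  · rw [Finset.disjoint_left]
    intro a ha ha'
    rw [hX₁, Finset.mem_filter] at ha
    rw [hX₂, Finset.mem_filter] at ha'
    exact ha.2 ha'.2.1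
  · rw [Finset.disjoint_left]
    intro a ha ha'
    rw [hX₁, Finset.mem_filter] at ha
    rw [hX₃, Finset.mem_filter] at ha'
    exact ha.2 ha'.2.1
  · rw [Finset.disjoint_left]
    intro a ha ha'
    rw [hX₂, Finset.mem_filter] at ha
    rw [hX₃, Finset.mem_filter] at ha'
    exact ha.2.2 ha'.2.2
  · rw [hunion]; exact hXindep
  · rw [hcomp]; exact Finset.singleton_subset_iff.mpr hy₁
  · rw [hcomp]; exact Finset.singleton_subset_iff.mpr hy₂
  · rw [hcomp]; omega
  · -- X₁ ∪ {y₁} independent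
    intro u hu v hv hadj
    rcases Finset.mem_union.mp hu with hu' | hu' <;>
      rcases Finset.mem_union.mp hv with hv' | hv'
    · exact hXindep (hunion ▸ Finset.mem_union_left _ (Finset.mem_union_left _ hu'))
        (hunion ▸ Finset.mem_union_left _ (Finset.mem_union_left _ hv')) hadj
    · rw [Finset.mem_singleton] at hv'; subst hv'
      rw [hX₁, Finset.mem_filter] at hu'
      exact hu'.2 hadj
    · rw [Finset.mem_singleton] at hu'; subst hu'
      rw [hX₁, Finset.mem_filter] at hv'
      exact hv'.2 hadj.symm
    · rw [Finset.mem_singleton] at hu' hv'; subst hu'; subst hv'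
      exact T.irrefl hadj
  · -- X₂ ∪ {y₂} independent
    intro u hu v hv hadj
    rcases Finset.mem_union.mp hu with hu' | hu' <;>
      rcases Finset.mem_union.mp hv with hv' | hv'
    · exact hXindep (hunion ▸ Finset.mem_union_left _ (Finset.mem_union_right _ hu'))
        (hunion ▸ Finset.mem_union_left _ (Finset.mem_union_right _ hv')) hadj
    · rw [Finset.mem_singleton] at hv'; subst hv'
      rw [hX₂, Finset.mem_filter] at hu'
      exact hu'.2.2 hadj
    · rw [Finset.mem_singleton] at hu'; subst hu'
      rw [hX₂, Finset.mem_filter] at hv'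
      exact hv'.2.2 hadj.symm
    · rw [Finset.mem_singleton] at hu' hv'; subst hu'; subst hv'
      exact T.irrefl hadj
  · -- |X₃| ≤ 2
    have h1 : X₃.card ≤ 1 := by
      rw [Finset.card_le_one]
      intro a ha b hb
      rw [hX₃, Finset.mem_filter] at ha hb
      exact acyclic_common_neighbor hac hne ha.2.1 ha.2.2 hb.2.1 hb.2.2
    simp only [Finset.card_singleton]
    omega

variable {T}

/-- If `{c}` is a cover of a connected graph with an edge, then `T` is a star with center `c`. -/
lemma star_structure (hconn : T.Connected) {c : V} (hcov : IsCover T {c}) :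
    ∀ u v : V, T.Adj u v ↔ (u = c ∧ v ≠ c) ∨ (v = c ∧ u ≠ c) := by
  have hadj : ∀ v : V, v ≠ c → T.Adj c v := by
    intro v hv
    obtain ⟨w⟩ := hconn.preconnected v c
    cases w with
    | nil => exact absurd rfl hv
    | cons h p =>
      rename_i x _
      rcases hcov h with h' | h'
      · exact absurd (Finset.mem_singleton.mp h') hv
      · rw [Finset.mem_singleton.mp h'] at h
        exact h.symm
  intro u v
  constructor
  · intro h
    rcases hcov h with h' | h'
    · rw [Finset.mem_singleton] at h'
      exact Or.inl ⟨h', h' ▸ h.ne'⟩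
    · rw [Finset.mem_singleton] at h'
      exact Or.inr ⟨h', h' ▸ h.ne⟩
  · rintro (⟨rfl, hv⟩ | ⟨rfl, hu⟩)
    · exact hadj v hv
    · exact (hadj u hu).symm

lemma star_cover {c : V}
    (hstar : ∀ u v : V, T.Adj u v ↔ (u = c ∧ v ≠ c) ∨ (v = c ∧ u ≠ c)) :
    IsCover T {c} := by
  intro u v h
  rcases (hstar u v).mp h with ⟨h', _⟩ | ⟨h', _⟩
  · exact Or.inl (Finset.mem_singleton.mpr h')
  · exact Or.inr (Finset.mem_singleton.mpr h')

lemma star_coverNumber {c : V}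
    (hstar : ∀ u v : V, T.Adj u v ↔ (u = c ∧ v ≠ c) ∨ (v = c ∧ u ≠ c))
    (h2 : 2 ≤ Fintype.card V) : coverNumber T = 1 := by
  have hle : coverNumber T ≤ 1 := by
    have := coverNumber_le T (star_cover hstar)
    simpa using this
  obtain ⟨v, hv⟩ := Fintype.exists_ne_of_one_lt_card (by omega) c
  have hge := one_le_coverNumber T ⟨c, v, (hstar c v).mpr (Or.inl ⟨rfl, hv⟩)⟩
  omega

/-- A star with at most 3 vertices (i.e. at most 2 leaves) is of class one. -/
lemma classOne_of_small_star {c : V}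
    (hstar : ∀ u v : V, T.Adj u v ↔ (u = c ∧ v ≠ c) ∨ (v = c ∧ u ≠ c))
    (h2 : 2 ≤ Fintype.card V) (h3 : Fintype.card V ≤ 3) : ClassOne T := by
  classical
  unfold ClassOne
  rw [star_coverNumber hstar h2]
  have hcompl : (Finset.univ : Finset V) \ (∅ ∪ ∅ ∪ (Finset.univ \ {c})) = {c} := by
    simp
  refine ⟨∅, ∅, Finset.univ \ {c}, {c}, {c}, Finset.disjoint_empty_left _,
    Finset.disjoint_empty_left _, Finset.disjoint_empty_left _, ?_,
    ⟨c, Finset.mem_singleton_self c⟩, ⟨c, Finset.mem_singleton_self c⟩,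
    by rw [hcompl], by rw [hcompl], by rw [hcompl]; simp, ?_, ?_, ?_⟩
  · intro u hu v hv hadj
    simp only [Finset.empty_union, Finset.mem_sdiff, Finset.mem_singleton] at hu hv
    rcases (hstar u v).mp hadj with ⟨h, _⟩ | ⟨h, _⟩
    · exact hu.2 h
    · exact hv.2 h
  · intro u hu v hv hadj
    simp only [Finset.empty_union, Finset.mem_singleton] at hu hv
    subst hu; subst hv
    exact T.irrefl hadj
  · intro u hu v hv hadj
    simp only [Finset.empty_union, Finset.mem_singleton] at hu hv
    subst hu; subst hv
    exact T.irrefl hadj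
  · have : (Finset.univ \ ({c} : Finset V)).card = Fintype.card V - 1 := by
      rw [Finset.card_sdiff_of_subset (Finset.singleton_subset_iff.mpr (Finset.mem_univ c))]
      simp
    simp only [Finset.card_singleton]
    omega

/-- A star with at least 4 vertices (i.e. at least 3 leaves) is of class two. -/
lemma classTwo_of_big_star {c : V}
    (hstar : ∀ u v : V, T.Adj u v ↔ (u = c ∧ v ≠ c) ∨ (v = c ∧ u ≠ c))
    (h4 : 4 ≤ Fintype.card V) : ClassTwo T := by
  classical
  unfold ClassTwo ClassOne
  rw [star_coverNumber hstar (by omega)]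
  rintro ⟨X₁, X₂, X₃, Y₁, Y₂, d12, d13, d23, hindX, hY₁ne, hY₂ne, hY₁s, hY₂s, hYcard,
    hind1, hind2, hcard3⟩
  set X : Finset V := X₁ ∪ X₂ ∪ X₃ with hXdef
  obtain ⟨w, hw⟩ := hY₁ne
  have hwY : w ∈ Finset.univ \ X := hY₁s hw
  have hYeq : Finset.univ \ X = {w} := by
    rw [Finset.eq_singleton_iff_unique_mem]
    exact ⟨hwY, fun x hx => Finset.card_le_one.mp hYcard x hx w hwY⟩
  have hY₁eq : Y₁ = {w} := by
    rcases Finset.subset_singleton_iff.mp (hYeq ▸ hY₁s) with h | h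
    · exact absurd h (Finset.nonempty_iff_ne_empty.mp ⟨w, hw⟩)
    · exact h
  have hY₂eq : Y₂ = {w} := by
    rcases Finset.subset_singleton_iff.mp (hYeq ▸ hY₂s) with h | h
    · obtain ⟨y, hy⟩ := hY₂ne
      exact absurd h (Finset.nonempty_iff_ne_empty.mp ⟨y, hy⟩)
    · exact h
  have hXmem : ∀ x : V, x ≠ w → x ∈ X := by
    intro x hx
    by_contra hxX
    have : x ∈ Finset.univ \ X := Finset.mem_sdiff.mpr ⟨Finset.mem_univ x, hxX⟩
    rw [hYeq, Finset.mem_singleton] at this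
    exact hx this
  have hwX : w ∉ X := (Finset.mem_sdiff.mp hwY).2
  by_cases hwc : w = c
  · -- w = c: X₁ = X₂ = ∅, X₃ ⊇ univ \ {c}, too big
    subst hwc
    have hX₁ : X₁ = ∅ := by
      rw [Finset.eq_empty_iff_forall_notMem]
      intro x hx
      have hxX : x ∈ X := Finset.mem_union_left _ (Finset.mem_union_left _ hx)
      have hxc : x ≠ w := fun h => hwX (h ▸ hxX)
      have hadj : T.Adj x w := (hstar x w).mpr (Or.inr ⟨rfl, hxc⟩)
      exact hind1 (Finset.mem_union_left _ hx)
        (Finset.mem_union_right _ (hY₁eq ▸ Finset.mem_singleton_self w)) hadj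
    have hX₂ : X₂ = ∅ := by
      rw [Finset.eq_empty_iff_forall_notMem]
      intro x hx
      have hxX : x ∈ X := Finset.mem_union_left _ (Finset.mem_union_right _ hx)
      have hxc : x ≠ w := fun h => hwX (h ▸ hxX)
      have hadj : T.Adj x w := (hstar x w).mpr (Or.inr ⟨rfl, hxc⟩)
      exact hind2 (Finset.mem_union_left _ hx)
        (Finset.mem_union_right _ (hY₂eq ▸ Finset.mem_singleton_self w)) hadj
    have hsub : Finset.univ \ {w} ⊆ X₃ := by
      intro x hx
      rw [Finset.mem_sdiff, Finset.mem_singleton] at hx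
      have := hXmem x hx.2
      rw [hXdef, hX₁, hX₂] at this
      simpa using this
    have hcard : (Finset.univ \ ({w} : Finset V)).card = Fintype.card V - 1 := by
      rw [Finset.card_sdiff_of_subset (Finset.singleton_subset_iff.mpr (Finset.mem_univ w))]
      simp
    have h1 := Finset.card_le_card hsub
    rw [hY₁eq, hY₂eq] at hcard3
    simp only [Finset.card_singleton] at hcard3
    omega
  · -- w ≠ c: c ∈ X along with some other vertex adjacent to c
    have hcX : c ∈ X := hXmem c (Ne.symm hwc)
    have : 0 < (Finset.univ \ ({w, c} : Finset V)).card := by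
      have hle : ({w, c} : Finset V).card ≤ 2 :=
        (Finset.card_insert_le _ _).trans (by simp)
      have heq : (Finset.univ \ ({w, c} : Finset V)).card
          = Fintype.card V - ({w, c} : Finset V).card := by
        rw [Finset.card_sdiff_of_subset (Finset.subset_univ _), Finset.card_univ]
      omega
    obtain ⟨v, hv⟩ := Finset.card_pos.mp this
    rw [Finset.mem_sdiff, Finset.mem_insert, Finset.mem_singleton] at hv
    push_neg at hv
    have hvX : v ∈ X := hXmem v hv.2.1
    have hadj : T.Adj c v := (hstar c v).mpr (Or.inl ⟨rfl, hv.2.2⟩)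
    exact hindX hcX hvX hadj

/-- Build the isomorphism with the star `K_{1,n}` from the star structure. -/
lemma star_iso {c : V}
    (hstar : ∀ u v : V, T.Adj u v ↔ (u = c ∧ v ≠ c) ∨ (v = c ∧ u ≠ c))
    (n : ℕ) (hn : Fintype.card V = n + 1) :
    Nonempty (T ≃g completeBipartiteGraph (Fin 1) (Fin n)) := by
  classical
  have hL : Fintype.card {x : V // x = c} = 1 := Fintype.card_subtype_eq c
  have hR : Fintype.card {x : V // ¬ x = c} = n := by
    rw [Fintype.card_subtype_compl, hL, hn]
    omega
  let eL := Fintype.equivFinOfCardEq hL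
  let eR := Fintype.equivFinOfCardEq hR
  let e : V ≃ Fin 1 ⊕ Fin n :=
    (Equiv.sumCompl (· = c)).symm.trans (Equiv.sumCongr eL eR)
  have hbase : ∀ u : V, ((Equiv.sumCompl (· = c)).symm u).isLeft ↔ u = c := by
    intro u
    by_cases h : u = c
    · rw [Equiv.sumCompl_symm_apply_of_pos (p := (· = c)) h]; simpa using h
    · rw [Equiv.sumCompl_symm_apply_of_neg (p := (· = c)) h]; simpa using h
  have hkey : ∀ u : V, (e u).isLeft ↔ u = c := by
    intro u
    rw [← hbase u]
    simp [e]
  have hkey' : ∀ u : V, (e u).isRight ↔ u ≠ c := by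
    intro u
    rw [Ne, ← hkey u]
    cases e u <;> simp
  refine ⟨⟨e, ?_⟩⟩
  intro u v
  show (completeBipartiteGraph (Fin 1) (Fin n)).Adj (e u) (e v) ↔ T.Adj u v
  rw [hstar u v]
  constructor
  · rintro (⟨h1, h2⟩ | ⟨h1, h2⟩)
    · exact Or.inl ⟨(hkey u).mp h1, (hkey' v).mp h2⟩
    · exact Or.inr ⟨(hkey v).mp h2, (hkey' u).mp h1⟩
  · rintro (⟨h1, h2⟩ | ⟨h1, h2⟩)
    · exact Or.inl ⟨(hkey u).mpr h1, (hkey' v).mpr h2⟩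
    · exact Or.inr ⟨(hkey' u).mpr h2, (hkey v).mpr h1⟩

/-- Conversely, extract the star structure from an isomorphism with `K_{1,n}`. -/
lemma star_structure_of_iso {n : ℕ}
    (f : T ≃g completeBipartiteGraph (Fin 1) (Fin n)) :
    ∀ u v : V, T.Adj u v ↔
      (u = f.symm (Sum.inl 0) ∧ v ≠ f.symm (Sum.inl 0)) ∨
      (v = f.symm (Sum.inl 0) ∧ u ≠ f.symm (Sum.inl 0)) := by
  set c := f.symm (Sum.inl 0) with hc
  have hkey : ∀ u : V, (f u).isLeft ↔ u = c := by
    intro u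
    cases h : f u with
    | inl a =>
      have ha : a = 0 := Subsingleton.elim a 0
      subst ha
      simp only [Sum.isLeft_inl, true_iff, hc]
      rw [← h]
      simp
    | inr a =>
      refine iff_of_false (by simp) ?_
      intro hu
      rw [hu, hc, RelIso.apply_symm_apply] at h
      exact Sum.inl_ne_inr h
  have hkey' : ∀ u : V, (f u).isRight ↔ u ≠ c := by
    intro u
    rw [Ne, ← hkey u]
    cases f u <;> simp
  intro u v
  rw [← f.map_adj_iff]
  show ((f u).isLeft ∧ (f v).isRight ∨ (f u).isRight ∧ (f v).isLeft) ↔ _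
  rw [hkey u, hkey' v, hkey' u, hkey v]
  tauto

end Helpers

/-- A finite tree with at least one edge is of class two iff it is isomorphic to a
star `K_{1,n}` for some `n ≥ 3`. -/
theorem tree_classTwo_iff_star {V : Type*} [Fintype V] [DecidableEq V]
    (T : SimpleGraph V) (hconn : T.Connected) (hacyclic : T.IsAcyclic)
    (hedge : ∃ u v, T.Adj u v) :
    ClassTwo T ↔
      ∃ n : ℕ, 3 ≤ n ∧ Nonempty (T ≃g completeBipartiteGraph (Fin 1) (Fin n)) := by
  have hcard2 : 2 ≤ Fintype.card V := by
    obtain ⟨u, v, huv⟩ := hedge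
    exact Fintype.one_lt_card_iff_nontrivial.mpr ⟨u, v, huv.ne⟩
  constructor
  · intro h2
    have hb1 : 1 ≤ coverNumber T := one_le_coverNumber T hedge
    have hblt : coverNumber T < 2 := by
      by_contra h
      exact h2 (classOne_of_two_le hacyclic (by omega))
    have hβ : coverNumber T = 1 := by omega
    obtain ⟨C, hC, hcardC⟩ := exists_min_cover T
    rw [hβ] at hcardC
    obtain ⟨c, rfl⟩ := Finset.card_eq_one.mp hcardC
    have hstar := star_structure hconn hC
    have h4 : 4 ≤ Fintype.card V := by
      by_contra h
      exact h2 (classOne_of_small_star hstar hcard2 (by omega))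
    exact ⟨Fintype.card V - 1, by omega, star_iso hstar _ (by omega)⟩
  · rintro ⟨n, hn, ⟨f⟩⟩
    have hcard : Fintype.card V = 1 + n := by
      rw [Fintype.card_congr f.toEquiv]
      simp
    exact classTwo_of_big_star (star_structure_of_iso f) (by omega)
end

section
/- Let G and H be finite simple graphs, each with at least two vertices, and suppose at least one of G, H contains an edge. Then the Cartesian (box) product G □ H is of class one. -/
open Finset

lemma feasible_of_cover {V : Type*} [Fintype V] [DecidableEq V]
    (K : SimpleGraph V) [DecidableRel K.Adj] (C : Finset V) (hC : IsCover K C)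
    (y₁ y₂ : V) (hy₁ : y₁ ∈ C) (hy₂ : y₂ ∈ C)
    (h3 : ((Finset.univ \ C).filter (fun z => K.Adj y₁ z ∧ K.Adj y₂ z)).card ≤ 2) :
    Feasible K C.card := by
  set X := Finset.univ \ C with hX
  have hXind : IsIndep K X := by
    intro u hu v hv hadj
    rcases hC hadj with h | h
    · rw [hX, Finset.mem_sdiff] at hu; exact hu.2 h
    · rw [hX, Finset.mem_sdiff] at hv; exact hv.2 h
  have hU : X.filter (fun z => ¬ K.Adj y₁ z) ∪
      X.filter (fun z => K.Adj y₁ z ∧ ¬ K.Adj y₂ z) ∪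
      X.filter (fun z => K.Adj y₁ z ∧ K.Adj y₂ z) = X := by
    ext z; simp only [Finset.mem_union, Finset.mem_filter]; tauto
  have hXc : Finset.univ \ X = C := by
    ext z; simp [hX]
  refine ⟨X.filter (fun z => ¬ K.Adj y₁ z),
    X.filter (fun z => K.Adj y₁ z ∧ ¬ K.Adj y₂ z),
    X.filter (fun z => K.Adj y₁ z ∧ K.Adj y₂ z),
    {y₁}, {y₂}, ?_, ?_, ?_, ?_, ?_, ?_, ?_, ?_, ?_, ?_, ?_, ?_⟩
  · rw [Finset.disjoint_left]; intro z hz hz'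
    simp only [Finset.mem_filter] at hz hz'; tauto
  · rw [Finset.disjoint_left]; intro z hz hz'
    simp only [Finset.mem_filter] at hz hz'; tauto
  · rw [Finset.disjoint_left]; intro z hz hz'
    simp only [Finset.mem_filter] at hz hz'; tauto
  · rw [hU]; exact hXind
  · exact Finset.singleton_nonempty _
  · exact Finset.singleton_nonempty _
  · rw [hU, hXc]; exact Finset.singleton_subset_iff.mpr hy₁
  · rw [hU, hXc]; exact Finset.singleton_subset_iff.mpr hy₂
  · rw [hU, hXc]
  · intro u hu v hv hadj
    rcases Finset.mem_union.mp hu with hu' | hu' <;>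
      rcases Finset.mem_union.mp hv with hv' | hv'
    · exact hXind (Finset.mem_filter.mp hu').1 (Finset.mem_filter.mp hv').1 hadj
    · rw [Finset.mem_singleton] at hv'; subst hv'
      exact (Finset.mem_filter.mp hu').2 hadj.symm
    · rw [Finset.mem_singleton] at hu'; subst hu'
      exact (Finset.mem_filter.mp hv').2 hadj
    · rw [Finset.mem_singleton] at hu' hv'; subst hu'; subst hv'
      exact K.irrefl hadj
  · intro u hu v hv hadj
    rcases Finset.mem_union.mp hu with hu' | hu' <;>
      rcases Finset.mem_union.mp hv with hv' | hv'
    · exact hXind (Finset.mem_filter.mp hu').1 (Finset.mem_filter.mp hv').1 hadj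
    · rw [Finset.mem_singleton] at hv'; subst hv'
      exact (Finset.mem_filter.mp hu').2.2 hadj.symm
    · rw [Finset.mem_singleton] at hu'; subst hu'
      exact (Finset.mem_filter.mp hv').2.2 hadj
    · rw [Finset.mem_singleton] at hu' hv'; subst hu'; subst hv'
      exact K.irrefl hadj
  · simpa using h3

/-- If `G` and `H` each have at least two vertices and at least one of them has an edge,
then the box product `G □ H` is of class one. -/
theorem boxProd_classOne {VG VH : Type*} [Fintype VG] [Fintype VH]
    [DecidableEq VG] [DecidableEq VH]
    (G : SimpleGraph VG) (H : SimpleGraph VH)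
    (hG : 2 ≤ Fintype.card VG) (hH : 2 ≤ Fintype.card VH)
    (hedge : (∃ u v, G.Adj u v) ∨ (∃ u v, H.Adj u v)) :
    ClassOne (G □ H) := by
  letI : DecidableRel (G □ H).Adj := Classical.decRel _
  -- minimum cover exists
  have hset : {n : ℕ | ∃ C : Finset (VG × VH), IsCover (G □ H) C ∧ C.card = n}.Nonempty :=
    ⟨(Finset.univ : Finset (VG × VH)).card, Finset.univ,
      fun u v _ => Or.inl (Finset.mem_univ u), rfl⟩
  obtain ⟨C, hC, hCcard⟩ := Nat.sInf_mem hset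
  have key : ∃ y₁ ∈ C, ∃ y₂ ∈ C,
      ((Finset.univ \ C).filter
        (fun z => (G □ H).Adj y₁ z ∧ (G □ H).Adj y₂ z)).card ≤ 2 := by
    -- C is nonempty
    have hCne : C.Nonempty := by
      have hG0 : Nonempty VG := Fintype.card_pos_iff.mp (by omega)
      have hH0 : Nonempty VH := Fintype.card_pos_iff.mp (by omega)
      rcases hedge with ⟨u, u', h⟩ | ⟨v, v', h⟩
      · obtain ⟨v⟩ := hH0
        have : (G □ H).Adj (u, v) (u', v) := SimpleGraph.boxProd_adj.mpr (Or.inl ⟨h, rfl⟩)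
        rcases hC this with h' | h' <;> exact ⟨_, h'⟩
      · obtain ⟨u⟩ := hG0
        have : (G □ H).Adj (u, v) (u, v') := SimpleGraph.boxProd_adj.mpr (Or.inr ⟨h, rfl⟩)
        rcases hC this with h' | h' <;> exact ⟨_, h'⟩
    by_cases hA : ∃ c₁ ∈ C, ∃ c₂ ∈ C, c₁.1 ≠ c₂.1 ∧ c₁.2 ≠ c₂.2
    · -- Case A: two cover vertices differing in both coordinates
      obtain ⟨c₁, hc₁, c₂, hc₂, h1, h2⟩ := hA
      refine ⟨c₁, hc₁, c₂, hc₂, ?_⟩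
      have hsub : (Finset.univ \ C).filter
          (fun z => (G □ H).Adj c₁ z ∧ (G □ H).Adj c₂ z) ⊆
          {(c₂.1, c₁.2), (c₁.1, c₂.2)} := by
        intro z hz
        obtain ⟨-, ha1, ha2⟩ := Finset.mem_filter.mp hz
        rw [SimpleGraph.boxProd_adj] at ha1 ha2
        simp only [Finset.mem_insert, Finset.mem_singleton]
        rcases ha1 with ⟨-, hb1⟩ | ⟨-, hb1⟩ <;> rcases ha2 with ⟨-, hb2⟩ | ⟨-, hb2⟩
        · exact absurd (hb1.trans hb2.symm) h2
        · left; rw [Prod.ext_iff]; exact ⟨hb2.symm, hb1.symm⟩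
        · right; rw [Prod.ext_iff]; exact ⟨hb1.symm, hb2.symm⟩
        · exact absurd (hb1.trans hb2.symm) h1
      calc _ ≤ ({(c₂.1, c₁.2), (c₁.1, c₂.2)} : Finset (VG × VH)).card :=
            Finset.card_le_card hsub
        _ ≤ 2 := by
            refine le_trans (Finset.card_insert_le _ _) ?_
            simp
    · push_neg at hA
      obtain ⟨c₀, hc₀⟩ := hCne
      by_cases hcol : ∀ c ∈ C, c.1 = c₀.1
      · -- Case B: C contained in the column {c₀.1} × VH
        set a := c₀.1
        -- H has no edges
        have hHe : ∀ v v' : VH, ¬ H.Adj v v' := by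
          intro v v' h
          have : Nontrivial VG := Fintype.one_lt_card_iff_nontrivial.mp (by omega)
          obtain ⟨u, hu⟩ := exists_ne a
          have : (G □ H).Adj (u, v) (u, v') := SimpleGraph.boxProd_adj.mpr (Or.inr ⟨h, rfl⟩)
          rcases hC this with h' | h' <;> exact hu (hcol _ h')
        have hGe : ∃ u u', G.Adj u u' := by
          rcases hedge with h | ⟨v, v', h⟩
          · exact h
          · exact absurd h (hHe v v')
        obtain ⟨u, u', hGuu⟩ := hGe
        have hVH : Nontrivial VH := Fintype.one_lt_card_iff_nontrivial.mp (by omega)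
        obtain ⟨v₁, v₂, hv12⟩ := exists_pair_ne VH
        have getc : ∀ v : VH, ∃ y ∈ C, y.1 = a ∧ y.2 = v := by
          intro v
          have : (G □ H).Adj (u, v) (u', v) := SimpleGraph.boxProd_adj.mpr (Or.inl ⟨hGuu, rfl⟩)
          rcases hC this with h' | h' <;> exact ⟨_, h', hcol _ h', rfl⟩
        obtain ⟨y₁, hy₁, hy₁a, hy₁v⟩ := getc v₁
        obtain ⟨y₂, hy₂, hy₂a, hy₂v⟩ := getc v₂
        refine ⟨y₁, hy₁, y₂, hy₂, ?_⟩
        have : (Finset.univ \ C).filter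
            (fun z => (G □ H).Adj y₁ z ∧ (G □ H).Adj y₂ z) = ∅ := by
          rw [Finset.filter_eq_empty_iff]
          rintro z - ⟨ha1, ha2⟩
          rw [SimpleGraph.boxProd_adj] at ha1 ha2
          rcases ha1 with ⟨-, hb1⟩ | ⟨hb1, -⟩
          · rcases ha2 with ⟨-, hb2⟩ | ⟨hb2, -⟩
            · exact hv12 (by rw [← hy₁v, ← hy₂v, hb1, hb2])
            · exact hHe _ _ hb2
          · exact hHe _ _ hb1
        rw [this]; simp
      · -- Case B': C contained in a row
        push_neg at hcol
        obtain ⟨p, hp, hpne⟩ := hcol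
        have hpq : p.2 = c₀.2 := hA p hp c₀ hc₀ hpne
        have hrow : ∀ c ∈ C, c.2 = p.2 := by
          intro c hc
          by_contra hne
          have h1 : c.1 = p.1 := by
            by_contra h1
            exact hne (hA c hc p hp h1)
          have h2 : c.1 = c₀.1 := by
            by_contra h2
            exact hne (by rw [hA c hc c₀ hc₀ h2, ← hpq])
          exact hpne (h1.symm.trans h2)
        -- G has no edges
        have hGe : ∀ u u' : VG, ¬ G.Adj u u' := by
          intro u u' h
          have : Nontrivial VH := Fintype.one_lt_card_iff_nontrivial.mp (by omega)
          obtain ⟨v, hv⟩ := exists_ne p.2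
          have : (G □ H).Adj (u, v) (u', v) := SimpleGraph.boxProd_adj.mpr (Or.inl ⟨h, rfl⟩)
          rcases hC this with h' | h' <;> exact hv (hrow _ h')
        have hHe : ∃ v v', H.Adj v v' := by
          rcases hedge with ⟨u, u', h⟩ | h
          · exact absurd h (hGe u u')
          · exact h
        obtain ⟨v, v', hHvv⟩ := hHe
        have hVG : Nontrivial VG := Fintype.one_lt_card_iff_nontrivial.mp (by omega)
        obtain ⟨u₁, u₂, hu12⟩ := exists_pair_ne VG
        have getc : ∀ u : VG, ∃ y ∈ C, y.2 = p.2 ∧ y.1 = u := by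
          intro u
          have : (G □ H).Adj (u, v) (u, v') := SimpleGraph.boxProd_adj.mpr (Or.inr ⟨hHvv, rfl⟩)
          rcases hC this with h' | h' <;> exact ⟨_, h', hrow _ h', rfl⟩
        obtain ⟨y₁, hy₁, hy₁b, hy₁u⟩ := getc u₁
        obtain ⟨y₂, hy₂, hy₂b, hy₂u⟩ := getc u₂
        refine ⟨y₁, hy₁, y₂, hy₂, ?_⟩
        have : (Finset.univ \ C).filter
            (fun z => (G □ H).Adj y₁ z ∧ (G □ H).Adj y₂ z) = ∅ := by
          rw [Finset.filter_eq_empty_iff]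
          rintro z - ⟨ha1, ha2⟩
          rw [SimpleGraph.boxProd_adj] at ha1 ha2
          rcases ha1 with ⟨hb1, -⟩ | ⟨-, hb1⟩
          · exact hGe _ _ hb1
          · rcases ha2 with ⟨hb2, -⟩ | ⟨-, hb2⟩
            · exact hGe _ _ hb2
            · exact hu12 (by rw [← hy₁u, ← hy₂u, hb1, hb2])
        rw [this]; simp
  obtain ⟨y₁, hy₁, y₂, hy₂, h3⟩ := key
  have := feasible_of_cover (G □ H) C hC y₁ y₂ hy₁ hy₂ h3
  unfold ClassOne coverNumber
  exact hCcard ▸ this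
end

section
/- For every n ≥ 1, the n-dimensional hypercube graph Q_n is of class one. -/
open Finset

/-- The `n`-dimensional hypercube graph: vertices are functions `Fin n → Bool`, adjacent
iff they differ in exactly one coordinate. -/
def hypercubeGraph (n : ℕ) : SimpleGraph (Fin n → Bool) where
  Adj x y := (Finset.univ.filter fun i => x i ≠ y i).card = 1
  symm := by
    constructor
    intro x y h
    have : (Finset.univ.filter fun i => y i ≠ x i) = (Finset.univ.filter fun i => x i ≠ y i) := by
      apply Finset.filter_congr
      intro i _
      simp [ne_comm]
    rw [this]
    exact h
  loopless := by
    constructor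
    intro x h
    simp at h

/-- parity of a vertex -/
def par {n : ℕ} (x : Fin n → Bool) : ZMod 2 := ∑ i, if x i then 1 else 0

lemma adj_par {n : ℕ} {x y : Fin n → Bool} (h : (hypercubeGraph n).Adj x y) :
    par x ≠ par y := by
  intro he
  have key : par y - par x = ((Finset.univ.filter fun i => x i ≠ y i).card : ZMod 2) := by
    rw [par, par, ← Finset.sum_sub_distrib]
    rw [Finset.card_filter, Nat.cast_sum]
    apply Finset.sum_congr rfl
    intro i _
    cases hx : x i <;> cases hy : y i <;> simp [hx, hy] <;> decide
  rw [he, sub_self, h] at key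
  simp at key

lemma flip_invol {n : ℕ} (i : Fin n) :
    Function.Involutive (fun x : Fin n → Bool => Function.update x i (!x i)) := by
  intro x
  funext j
  rcases eq_or_ne j i with rfl | hj
  · simp
  · simp [Function.update_of_ne hj]

lemma adj_flip {n : ℕ} (i : Fin n) (x : Fin n → Bool) :
    (hypercubeGraph n).Adj x (Function.update x i (!x i)) := by
  show (Finset.univ.filter fun j => x j ≠ Function.update x i (!x i) j).card = 1
  have : (Finset.univ.filter fun j => x j ≠ Function.update x i (!x i) j) = {i} := by
    ext j
    rcases eq_or_ne j i with rfl | hj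
    · simp
    · simp [Function.update_of_ne hj, hj]
  rw [this, Finset.card_singleton]

lemma half_card {V : Type*} [Fintype V] [DecidableEq V] (g : V → V)
    (hg : Function.Involutive g) (A : Finset V) (h : ∀ x, x ∈ A ↔ g x ∉ A) :
    Finset.image g A = Finset.univ \ A := by
  ext y
  simp only [Finset.mem_image, Finset.mem_sdiff, Finset.mem_univ, true_and]
  constructor
  · rintro ⟨x, hx, rfl⟩; exact (h x).1 hx
  · intro hy
    refine ⟨g y, ?_, hg y⟩
    rw [h (g y), hg y]
    exact fun hc => hy hc

lemma half_card' {V : Type*} [Fintype V] [DecidableEq V] (g : V → V)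
    (hg : Function.Involutive g) (A : Finset V) (h : ∀ x, x ∈ A ↔ g x ∉ A) :
    2 * A.card = Fintype.card V := by
  have h1 : (Finset.univ \ A).card = A.card := by
    rw [← half_card g hg A h, Finset.card_image_of_injective _ hg.injective]
  have h2 := Finset.card_sdiff_of_subset (Finset.subset_univ A)
  have h3 : A.card ≤ Finset.univ.card := Finset.card_le_card (Finset.subset_univ A)
  rw [Finset.card_univ] at h2 h3
  omega

lemma zmod2_cases (a : ZMod 2) : a = 0 ∨ a = 1 := by revert a; decide

lemma cover_bound {n : ℕ} (hn : 1 ≤ n) {C : Finset (Fin n → Bool)}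
    (hC : IsCover (hypercubeGraph n) C) : 2 ^ (n - 1) ≤ C.card := by
  set i0 : Fin n := ⟨0, hn⟩ with hi0
  set S := Finset.univ.filter (fun x : Fin n → Bool => x i0 = false) with hS
  have hScard : 2 * S.card = 2 ^ n := by
    rw [half_card' (fun x => Function.update x i0 (!x i0)) (flip_invol i0) S ?_]
    · simp
    · intro x
      simp [hS]
  have hcard : S.card = 2 ^ (n - 1) := by
    have h2 : 2 ^ n = 2 * 2 ^ (n - 1) := by
      rw [← pow_succ']
      congr 1
      omega
    omega
  have hsurj : Set.SurjOn (fun x : Fin n → Bool => Function.update x i0 false) C S := by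
    intro y hy
    simp only [hS, Finset.coe_filter, Set.mem_setOf_eq, Finset.mem_univ, true_and] at hy
    have hself : Function.update y i0 false = y := by
      rw [← hy]
      exact Function.update_eq_self i0 y
    rcases hC (adj_flip i0 y) with h | h
    · exact ⟨y, h, hself⟩
    · refine ⟨Function.update y i0 (!y i0), h, ?_⟩
      simp only [Function.update_idem]
      exact hself
  have := Finset.card_le_card_of_surjOn _ hsurj
  omega

lemma coverNumber_ge {n : ℕ} (hn : 1 ≤ n) :
    2 ^ (n - 1) ≤ coverNumber (hypercubeGraph n) := by
  rw [coverNumber]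
  apply le_csInf
  · exact ⟨Finset.univ.card, Finset.univ, fun u v _ => Or.inl (Finset.mem_univ u), rfl⟩
  · rintro k ⟨C, hC, rfl⟩
    exact cover_bound hn hC

/-- For every `n ≥ 1`, the `n`-dimensional hypercube is of class one. -/
theorem hypercube_classOne (n : ℕ) (hn : 1 ≤ n) : ClassOne (hypercubeGraph n) := by
  set i0 : Fin n := ⟨0, hn⟩ with hi0
  set E := Finset.univ.filter (fun x : Fin n → Bool => par x = 0) with hE
  have hEflip : ∀ x : Fin n → Bool, x ∈ E ↔ Function.update x i0 (!x i0) ∉ E := by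
    intro x
    have hne := adj_par (adj_flip i0 x)
    simp only [hE, Finset.mem_filter, Finset.mem_univ, true_and]
    constructor
    · intro h0 h1
      exact hne (h0.trans h1.symm)
    · intro h1
      rcases zmod2_cases (par x) with h | h
      · exact h
      · exfalso
        apply h1
        rcases zmod2_cases (par (Function.update x i0 (!x i0))) with h' | h'
        · exact h'
        · exact absurd (h.trans h'.symm) hne
  have hEcard : 2 * E.card = 2 ^ n := by
    rw [half_card' (fun x => Function.update x i0 (!x i0)) (flip_invol i0) E hEflip]
    simp
  have hOcard : (Finset.univ \ E).card = 2 ^ (n - 1) := by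
    have h2 : 2 ^ n = 2 * 2 ^ (n - 1) := by
      rw [← pow_succ']
      congr 1
      omega
    have h3 := Finset.card_sdiff_of_subset (Finset.subset_univ E)
    have h4 : E.card ≤ Finset.univ.card := Finset.card_le_card (Finset.subset_univ E)
    rw [Finset.card_univ] at h3 h4
    simp only [Fintype.card_fun, Fintype.card_fin, Fintype.card_bool] at h3 h4
    omega
  have hEindep : IsIndep (hypercubeGraph n) E := by
    intro u hu v hv hadj
    simp only [hE, Finset.mem_filter] at hu hv
    exact adj_par hadj (hu.2.trans hv.2.symm)
  have hOindep : IsIndep (hypercubeGraph n) (Finset.univ \ E) := by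
    intro u hu v hv hadj
    simp only [hE, Finset.mem_sdiff, Finset.mem_filter, Finset.mem_univ, true_and] at hu hv
    rcases zmod2_cases (par u) with h | h
    · exact hu h
    rcases zmod2_cases (par v) with h' | h'
    · exact hv h'
    exact adj_par hadj (h.trans h'.symm)
  have hunion : (∅ ∪ ∅ ∪ E : Finset (Fin n → Bool)) = E := by simp
  have hOne : (Finset.univ \ E).Nonempty := by
    rw [← Finset.card_pos, hOcard]
    exact Nat.pow_pos (by norm_num)
  refine ⟨∅, ∅, E, Finset.univ \ E, Finset.univ \ E, ?_, ?_, ?_, ?_, ?_, ?_, ?_, ?_, ?_, ?_, ?_, ?_⟩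
  · simp
  · simp
  · simp
  · rw [hunion]; exact hEindep
  · exact hOne
  · exact hOne
  · rw [hunion]
  · rw [hunion]
  · rw [hunion, hOcard]
    exact coverNumber_ge hn
  · rw [Finset.empty_union]; exact hOindep
  · rw [Finset.empty_union]; exact hOindep
  · have hEc : E.card = 2 ^ (n - 1) := by
      have h2 : 2 ^ n = 2 * 2 ^ (n - 1) := by
        rw [← pow_succ']
        congr 1
        omega
      omega
    rw [hEc, hOcard]
    omega
end

section
/- Let G be a finite nonempty r-regular simple graph with 2 ≤ r ≤ 5. Then G is of class one. -/
open Finset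

lemma greedy_indep {V : Type*} [DecidableEq V] (G : SimpleGraph V) [DecidableRel G.Adj] (D : ℕ) :
    ∀ (n : ℕ) (W : Finset V), W.card = n →
      (∀ y ∈ W, (W.filter (fun z => G.Adj y z)).card ≤ D) →
      ∃ I, I ⊆ W ∧ IsIndep G I ∧ W.card ≤ I.card * (D + 1) := by
  intro n
  induction n using Nat.strong_induction_on with
  | _ n ih =>
    intro W hcard hdeg
    rcases W.eq_empty_or_nonempty with rfl | ⟨w, hw⟩
    · exact ⟨∅, by simp, fun u hu => by simp at hu, by simp⟩
    · set B := insert w (W.filter (fun z => G.Adj w z)) with hB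
      have hBW : B ⊆ W := by
        intro b hb
        rcases Finset.mem_insert.mp hb with rfl | hb
        · exact hw
        · exact (Finset.mem_filter.mp hb).1
      have hBcard : B.card ≤ D + 1 := by
        calc B.card ≤ (W.filter (fun z => G.Adj w z)).card + 1 := Finset.card_insert_le _ _
        _ ≤ D + 1 := by have := hdeg w hw; omega
      set W' := W \ B with hW'
      have hW'sub : W' ⊆ W := Finset.sdiff_subset
      have hW'card : W'.card = W.card - B.card := Finset.card_sdiff_of_subset hBW
      have hBpos : 0 < B.card := Finset.card_pos.mpr ⟨w, Finset.mem_insert_self _ _⟩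
      have hWpos : 0 < W.card := Finset.card_pos.mpr ⟨w, hw⟩
      have hlt : W'.card < n := by
        have := Finset.card_le_card hBW
        omega
      obtain ⟨I', hI'sub, hI'ind, hI'card⟩ := ih W'.card hlt W' rfl (by
        intro y hy
        calc (W'.filter (fun z => G.Adj y z)).card
            ≤ (W.filter (fun z => G.Adj y z)).card :=
              Finset.card_le_card (Finset.filter_subset_filter _ hW'sub)
          _ ≤ D := hdeg y (hW'sub hy))
      have hwI' : w ∉ I' := fun h => (Finset.mem_sdiff.mp (hI'sub h)).2 (Finset.mem_insert_self _ _)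
      refine ⟨insert w I', ?_, ?_, ?_⟩
      · intro a ha
        rcases Finset.mem_insert.mp ha with rfl | ha
        · exact hw
        · exact hW'sub (hI'sub ha)
      · intro u hu v hv hadj
        rcases Finset.mem_insert.mp hu with hu2 | hu2
        · subst hu2
          rcases Finset.mem_insert.mp hv with hv2 | hv2
          · subst hv2; exact G.irrefl hadj
          · have hnB : v ∉ B := (Finset.mem_sdiff.mp (hI'sub hv2)).2
            exact hnB (Finset.mem_insert_of_mem (Finset.mem_filter.mpr ⟨hW'sub (hI'sub hv2), hadj⟩))
        · rcases Finset.mem_insert.mp hv with hv2 | hv2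
          · subst hv2
            have hnB : u ∉ B := (Finset.mem_sdiff.mp (hI'sub hu2)).2
            exact hnB (Finset.mem_insert_of_mem (Finset.mem_filter.mpr ⟨hW'sub (hI'sub hu2), hadj.symm⟩))
          · exact hI'ind hu2 hv2 hadj
      · rw [Finset.card_insert_of_notMem hwI']
        have : W.card = W'.card + B.card := by
          have := Finset.card_le_card hBW; omega
        calc W.card = W'.card + B.card := this
          _ ≤ I'.card * (D + 1) + (D + 1) := by omega
          _ = (I'.card + 1) * (D + 1) := by ring

/-- Every finite nonempty `r`-regular graph with `2 ≤ r ≤ 5` is of class one. -/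
theorem regular_classOne_of_deg_le_five {V : Type*} [Fintype V] [DecidableEq V] [Nonempty V]
    (G : SimpleGraph V) [DecidableRel G.Adj] (r : ℕ) (hr2 : 2 ≤ r) (hr5 : r ≤ 5)
    (hreg : G.IsRegularOfDegree r) : ClassOne G := by
  classical
  -- maximum independent set
  obtain ⟨X, hXmem, hXmax⟩ := Finset.exists_max_image
    ((Finset.univ : Finset (Finset V)).filter (fun A => IsIndep G A)) Finset.card
    ⟨∅, Finset.mem_filter.mpr ⟨Finset.mem_univ _, fun u hu => by simp at hu⟩⟩
  have hXind : IsIndep G X := (Finset.mem_filter.mp hXmem).2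
  have hXmax' : ∀ A : Finset V, IsIndep G A → A.card ≤ X.card := fun A hA =>
    hXmax A (Finset.mem_filter.mpr ⟨Finset.mem_univ _, hA⟩)
  -- X is nonempty
  obtain ⟨v₀⟩ := ‹Nonempty V›
  have hXne : X.Nonempty := by
    rw [← Finset.card_pos]
    have h1 : IsIndep G {v₀} := by
      intro u hu v hv hadj
      simp only [Finset.mem_singleton] at hu hv
      subst hu; subst hv; exact G.irrefl hadj
    have := hXmax' _ h1
    rw [Finset.card_singleton] at this; omega
  set Y := (Finset.univ : Finset V) \ X with hYdef
  -- |Y| ≤ coverNumber G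
  have hcov : Y.card ≤ coverNumber G := by
    apply le_csInf
    · exact ⟨(Finset.univ : Finset V).card, Finset.univ, fun u v _ => Or.inl (Finset.mem_univ _), rfl⟩
    · rintro m ⟨C, hC, rfl⟩
      have hind : IsIndep G (Finset.univ \ C) := by
        intro u hu v hv hadj
        rcases hC hadj with h | h
        · exact (Finset.mem_sdiff.mp hu).2 h
        · exact (Finset.mem_sdiff.mp hv).2 h
      have h1 := hXmax' _ hind
      have h2 : (Finset.univ \ C).card = Fintype.card V - C.card := by
        rw [Finset.card_sdiff_of_subset (Finset.subset_univ _), Finset.card_univ]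
      have h3 : Y.card = Fintype.card V - X.card := by
        rw [hYdef, Finset.card_sdiff_of_subset (Finset.subset_univ _), Finset.card_univ]
      have h4 := Finset.card_le_univ C
      have h5 := Finset.card_le_univ X
      omega
  -- every y in Y has a neighbor in X
  have hnbr : ∀ y ∈ Y, ∃ x ∈ X, G.Adj y x := by
    intro y hy
    by_contra hcon
    push_neg at hcon
    have hyX : y ∉ X := (Finset.mem_sdiff.mp hy).2
    have hins : IsIndep G (insert y X) := by
      intro u hu v hv hadj
      rcases Finset.mem_insert.mp hu with hu2 | hu2
      · subst hu2
        rcases Finset.mem_insert.mp hv with hv2 | hv2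
        · subst hv2; exact G.irrefl hadj
        · exact hcon v hv2 hadj
      · rcases Finset.mem_insert.mp hv with hv2 | hv2
        · subst hv2; exact hcon u hu2 hadj.symm
        · exact hXind hu2 hv2 hadj
    have := hXmax' _ hins
    rw [Finset.card_insert_of_notMem hyX] at this
    omega
  -- |Y| ≥ r
  have hYr : r ≤ Y.card := by
    obtain ⟨x₀, hx₀⟩ := hXne
    have hsub : G.neighborFinset x₀ ⊆ Y := by
      intro w hw
      rw [SimpleGraph.mem_neighborFinset] at hw
      rw [hYdef, Finset.mem_sdiff]
      refine ⟨Finset.mem_univ _, fun hwX => ?_⟩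
      exact hXind hx₀ hwX hw
    have := Finset.card_le_card hsub
    rwa [SimpleGraph.card_neighborFinset_eq_degree, hreg x₀] at this
  have hYne : Y.Nonempty := Finset.card_pos.mp (by omega)
  -- y₀ minimizing number of X-neighbors
  obtain ⟨y₀, hy₀Y, hy₀min⟩ := Finset.exists_min_image Y
    (fun y => (X.filter (fun x => G.Adj y x)).card) hYne
  obtain ⟨d, hd⟩ : ∃ n, n = (X.filter (fun x => G.Adj y₀ x)).card := ⟨_, rfl⟩
  have hd1 : 1 ≤ d := by
    obtain ⟨x, hxX, hxadj⟩ := hnbr y₀ hy₀Y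
    have hmem : x ∈ X.filter (fun x => G.Adj y₀ x) := Finset.mem_filter.mpr ⟨hxX, hxadj⟩
    rw [hd]
    exact Finset.card_pos.mpr ⟨x, hmem⟩
  have hdr : d ≤ r := by
    have hsub : X.filter (fun x => G.Adj y₀ x) ⊆ G.neighborFinset y₀ := by
      intro x hx
      rw [SimpleGraph.mem_neighborFinset]
      exact (Finset.mem_filter.mp hx).2
    have := Finset.card_le_card hsub
    rw [SimpleGraph.card_neighborFinset_eq_degree, hreg y₀] at this
    omega
  -- internal degree bound in Y
  have hdeg : ∀ y ∈ Y, (Y.filter (fun z => G.Adj y z)).card ≤ r - d := by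
    intro y hy
    have hdisj : Disjoint (X.filter (fun x => G.Adj y x)) (Y.filter (fun z => G.Adj y z)) := by
      apply Finset.disjoint_filter_filter
      rw [hYdef]
      exact Finset.disjoint_sdiff
    have hsub : X.filter (fun x => G.Adj y x) ∪ Y.filter (fun z => G.Adj y z) ⊆
        G.neighborFinset y := by
      intro a ha
      rw [SimpleGraph.mem_neighborFinset]
      rcases Finset.mem_union.mp ha with h | h
      · exact (Finset.mem_filter.mp h).2
      · exact (Finset.mem_filter.mp h).2
    have h1 := Finset.card_le_card hsub
    rw [Finset.card_union_of_disjoint hdisj, SimpleGraph.card_neighborFinset_eq_degree,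
      hreg y] at h1
    have h2 : (X.filter (fun x => G.Adj y₀ x)).card ≤ (X.filter (fun x => G.Adj y x)).card :=
      hy₀min y hy
    omega
  -- greedy independent set in Y
  obtain ⟨I, hIY, hIind, hIcard⟩ := greedy_indep G (r - d) Y.card Y rfl hdeg
  have hIne : I.Nonempty := by
    rw [← Finset.card_pos]
    rcases Nat.eq_zero_or_pos I.card with h | h
    · rw [h, Nat.zero_mul] at hIcard; omega
    · exact h
  have hId : d ≤ I.card + 1 := by
    by_contra hcon
    push_neg at hcon
    have hIle : I.card ≤ d - 2 := by omega
    have : Y.card ≤ (d - 2) * (r - d + 1) :=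
      le_trans hIcard (Nat.mul_le_mul_right _ hIle)
    interval_cases r <;> interval_cases d <;> omega
  -- the construction
  set X₁ := X.filter (fun x => ∀ y ∈ I, ¬ G.Adj x y) with hX₁
  set X₂ := X.filter (fun x => (∃ y ∈ I, G.Adj x y) ∧ ¬ G.Adj x y₀) with hX₂
  set X₃ := X.filter (fun x => (∃ y ∈ I, G.Adj x y) ∧ G.Adj x y₀) with hX₃
  have hunion : X₁ ∪ X₂ ∪ X₃ = X := by
    ext x
    simp only [hX₁, hX₂, hX₃, Finset.mem_union, Finset.mem_filter]
    constructor
    · rintro ((h | h) | h) <;> exact h.1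
    · intro hx
      by_cases h1 : ∃ y ∈ I, G.Adj x y
      · by_cases h2 : G.Adj x y₀
        · exact Or.inr ⟨hx, h1, h2⟩
        · exact Or.inl (Or.inr ⟨hx, h1, h2⟩)
      · push_neg at h1
        exact Or.inl (Or.inl ⟨hx, h1⟩)
  have hX₃card : X₃.card ≤ d := by
    have hsub : X₃ ⊆ X.filter (fun x => G.Adj y₀ x) := by
      intro x hx
      rw [hX₃, Finset.mem_filter] at hx
      exact Finset.mem_filter.mpr ⟨hx.1, hx.2.2.symm⟩
    exact le_trans (Finset.card_le_card hsub) (le_of_eq hd.symm)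
  refine ⟨X₁, X₂, X₃, I, {y₀}, ?_, ?_, ?_, ?_, hIne, Finset.singleton_nonempty _, ?_, ?_, ?_, ?_, ?_, ?_⟩
  · rw [Finset.disjoint_left]
    intro a h1 h2
    rw [hX₁, Finset.mem_filter] at h1
    rw [hX₂, Finset.mem_filter] at h2
    obtain ⟨y, hyI, hadj⟩ := h2.2.1
    exact h1.2 y hyI hadj
  · rw [Finset.disjoint_left]
    intro a h1 h2
    rw [hX₁, Finset.mem_filter] at h1
    rw [hX₃, Finset.mem_filter] at h2
    obtain ⟨y, hyI, hadj⟩ := h2.2.1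
    exact h1.2 y hyI hadj
  · rw [Finset.disjoint_left]
    intro a h1 h2
    rw [hX₂, Finset.mem_filter] at h1
    rw [hX₃, Finset.mem_filter] at h2
    exact h1.2.2 h2.2.2
  · rw [hunion]; exact hXind
  · rw [hunion]; exact hIY
  · rw [hunion]
    exact Finset.singleton_subset_iff.mpr hy₀Y
  · rw [hunion]; exact hcov
  · -- IsIndep G (X₁ ∪ I)
    intro u hu v hv hadj
    rcases Finset.mem_union.mp hu with hu2 | hu2 <;> rcases Finset.mem_union.mp hv with hv2 | hv2
    · exact hXind (Finset.mem_filter.mp hu2).1 (Finset.mem_filter.mp hv2).1 hadj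
    · exact (Finset.mem_filter.mp hu2).2 v hv2 hadj
    · exact (Finset.mem_filter.mp hv2).2 u hu2 hadj.symm
    · exact hIind hu2 hv2 hadj
  · -- IsIndep G (X₂ ∪ {y₀})
    intro u hu v hv hadj
    rcases Finset.mem_union.mp hu with hu2 | hu2 <;> rcases Finset.mem_union.mp hv with hv2 | hv2
    · exact hXind (Finset.mem_filter.mp hu2).1 (Finset.mem_filter.mp hv2).1 hadj
    · rw [Finset.mem_singleton] at hv2
      subst hv2
      exact (Finset.mem_filter.mp hu2).2.2 hadj
    · rw [Finset.mem_singleton] at hu2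
      subst hu2
      exact (Finset.mem_filter.mp hv2).2.2 hadj.symm
    · rw [Finset.mem_singleton] at hu2 hv2
      subst hu2; subst hv2
      exact G.irrefl hadj
  · rw [Finset.card_singleton]
    omega
end
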